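/- Let φ(x̄) be a formula of SCL^k (the k-variable fragment of SCL, i.e. using at most k distinct variables) with vocabulary τ. Then there exist a finite relational vocabulary τ' ⊇ τ and a first-order formula Ψ(x̄) of FO^k over τ' such that: (1) if 𝔄 is a τ-model such that Eloise has no winning strategy in G_∞(𝔄,s,φ), then 𝔄 can be expanded to a τ'-model 𝔄' with 𝔄',s ⊨ Ψ(x̄); and (2) if 𝔄' is a τ'-model with 𝔄',s ⊨ Ψ(x̄), then Eloise has no winning strategy in G_∞(𝔄'↾τ, s, φ). Consequently, every formula of SCL^k is equivalent to a formula of universal second-order logic whose first-order part uses at most k variables. -/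

import Mathlib

/-
Common formalization of the logics SCL (static computation logic, unbounded
game-theoretic semantics) and BndSCL (bounded semantics), following the paper
"First-order logic with self-reference".

* Games are played on arbitrary (possibly infinite) arenas; plays are maximal
  walks; strategies are functions from finite walks (histories) to positions;
  infinite plays, and finite plays ending at a dead end where `win` holds for
  neither player, are won by nobody.
* The semantic games are formalized with positions carrying the current
  (sub)formula, an environment binding each label symbol to the labelled
  formula it most recently named (this is the standard closure rendering of
  "reference formula of a claim-symbol occurrence"), the current assignment
  and the polarity (+ = true, − = false).  The bounded game additionally
  carries a clock value.
-/

set_option autoImplicit false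

universe u

/-! ## Generic two-player games on (possibly infinite) arenas -/

inductive Player : Type
  | eloise : Player
  | abelard : Player
deriving DecidableEq

def Player.opp : Player → Player
  | .eloise => .abelard
  | .abelard => .eloise

/-- A game arena: an ownership function (corresponding to the partition
`V = V₀ ∪ V₁`), an edge relation, and a predicate telling which player (if
any) wins a play ending at a given dead-end position. -/
structure GameArena (P : Type u) where
  turn : P → Player
  edge : P → P → Prop
  win : P → Player → Prop

namespace GameArena

variable {P : Type u} (A : GameArena P)

def DeadEnd (u : P) : Prop := ∀ x, ¬ A.edge u x

/-- `w` is a finite nonempty walk whose first element is `v`. -/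
def IsWalkFrom (v : P) (w : List P) : Prop :=
  w.head? = some v ∧ List.Chain' A.edge w

/-- A finite (maximal) play from `v`: a walk whose last element is a dead end. -/
def IsFinitePlay (v : P) (w : List P) : Prop :=
  A.IsWalkFrom v w ∧ ∀ u, w.getLast? = some u → A.DeadEnd u

/-- An infinite play from `v`. -/
def IsInfPlay (v : P) (f : ℕ → P) : Prop :=
  f 0 = v ∧ ∀ n, A.edge (f n) (f (n + 1))

/-- A strategy (a function from histories to positions) of player `pl` is
legal if it always prescribes a move along an edge whenever a move exists. -/
def LegalFor (pl : Player) (v : P) (σ : List P → P) : Prop :=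
  ∀ w u, A.IsWalkFrom v w → w.getLast? = some u → A.turn u = pl →
    (∃ x, A.edge u x) → A.edge u (σ w)

/-- The strategy `σ` of player `pl` is followed in the finite play `w`. -/
def FollowsFin (pl : Player) (σ : List P → P) (w : List P) : Prop :=
  ∀ q u x, (q ++ [x]) <+: w → q.getLast? = some u → A.turn u = pl → x = σ q

/-- The strategy `σ` of player `pl` is followed in the infinite play `f`. -/
def FollowsInf (pl : Player) (σ : List P → P) (f : ℕ → P) : Prop :=
  ∀ n, A.turn (f n) = pl →
    f (n + 1) = σ (List.ofFn fun i : Fin (n + 1) => f i)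

/-- `σ` is a winning strategy of player `pl` from `v`: it is legal, every
finite maximal play following it ends in a dead end won by `pl`, and no
infinite play follows it (infinite plays are won by neither player). -/
def WinningStrategy (pl : Player) (v : P) (σ : List P → P) : Prop :=
  A.LegalFor pl v σ ∧
  (∀ w, A.IsFinitePlay v w → A.FollowsFin pl σ w →
      ∃ u, w.getLast? = some u ∧ A.win u pl) ∧
  (∀ f, A.IsInfPlay v f → ¬ A.FollowsInf pl σ f)

def HasWinningStrategy (pl : Player) (v : P) : Prop :=
  ∃ σ : List P → P, A.WinningStrategy pl v σ

end GameArena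

/-- A positional strategy: its moves depend only on the current position. -/
def Positional {P : Type u} (σ : List P → P) : Prop :=
  ∀ q q' : List P, q.getLast? = q'.getLast? → σ q = σ q'

/-! ## Syntax of SCL / BndSCL -/

/-- A purely relational vocabulary. -/
structure Vocab : Type 1 where
  Rel : Type
  arity : Rel → ℕ

/-- Formulas of SCL / BndSCL over the vocabulary `V`.  Variables and label
symbols are natural numbers; `claim L` is the claim symbol `C_L` and
`lab L φ` is the labelled formula `L φ`. -/
inductive SCLFormula (V : Vocab) : Type
  | bot : SCLFormula V
  | eq (x y : ℕ) : SCLFormula V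
  | rel (R : V.Rel) (args : Fin (V.arity R) → ℕ) : SCLFormula V
  | claim (L : ℕ) : SCLFormula V
  | not (φ : SCLFormula V) : SCLFormula V
  | and (φ ψ : SCLFormula V) : SCLFormula V
  | or (φ ψ : SCLFormula V) : SCLFormula V
  | ex (x : ℕ) (φ : SCLFormula V) : SCLFormula V
  | all (x : ℕ) (φ : SCLFormula V) : SCLFormula V
  | lab (L : ℕ) (φ : SCLFormula V) : SCLFormula V

namespace SCLFormula

variable {V : Vocab}

/-- First-order atoms. -/
def IsFOAtom : SCLFormula V → Prop
  | .bot => True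
  | .eq _ _ => True
  | .rel _ _ => True
  | _ => False

/-- Purely first-order formulas (no claim symbols, no label symbols). -/
def IsFO : SCLFormula V → Prop
  | .bot => True
  | .eq _ _ => True
  | .rel _ _ => True
  | .claim _ => False
  | .not φ => IsFO φ
  | .and φ ψ => IsFO φ ∧ IsFO ψ
  | .or φ ψ => IsFO φ ∧ IsFO ψ
  | .ex _ φ => IsFO φ
  | .all _ φ => IsFO φ
  | .lab _ _ => False

/-- Free (individual) variables. -/
def freeVars : SCLFormula V → Finset ℕ
  | .bot => ∅
  | .eq x y => {x, y}
  | .rel _ a => Finset.image a Finset.univ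
  | .claim _ => ∅
  | .not φ => freeVars φ
  | .and φ ψ => freeVars φ ∪ freeVars ψ
  | .or φ ψ => freeVars φ ∪ freeVars ψ
  | .ex x φ => freeVars φ \ {x}
  | .all x φ => freeVars φ \ {x}
  | .lab _ φ => freeVars φ

/-- All variables occurring in a formula (free or bound). -/
def vars : SCLFormula V → Finset ℕ
  | .bot => ∅
  | .eq x y => {x, y}
  | .rel _ a => Finset.image a Finset.univ
  | .claim _ => ∅
  | .not φ => vars φ
  | .and φ ψ => vars φ ∪ vars ψ
  | .or φ ψ => vars φ ∪ vars ψ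
  | .ex x φ => insert x (vars φ)
  | .all x φ => insert x (vars φ)
  | .lab _ φ => vars φ

/-- Sentences: formulas with no free variables. -/
def IsSentence (φ : SCLFormula V) : Prop := freeVars φ = ∅

end SCLFormula

/-! ## Structures and first-order (Tarski) satisfaction -/

/-- A (suitable) model for vocabulary `V`: a nonempty domain together with an
interpretation of all relation symbols. -/
structure Struct (V : Vocab) where
  Dom : Type u
  dom_nonempty : Nonempty Dom
  interp : ∀ R : V.Rel, (Fin (V.arity R) → Dom) → Prop

attribute [instance] Struct.dom_nonempty

/-- Satisfaction of atoms (false on non-atoms). -/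
def atomSat {V : Vocab} (M : Struct.{u} V) (s : ℕ → M.Dom) : SCLFormula V → Prop
  | .bot => False
  | .eq x y => s x = s y
  | .rel R a => M.interp R fun i => s (a i)
  | _ => False

/-- Standard (Tarski) first-order satisfaction.  It is only meaningful on
purely first-order formulas; claim symbols are interpreted as `False` and
label symbols are ignored. -/
def FOSat {V : Vocab} (M : Struct.{u} V) : (ℕ → M.Dom) → SCLFormula V → Prop
  | _, .bot => False
  | s, .eq x y => s x = s y
  | s, .rel R a => M.interp R fun i => s (a i)
  | _, .claim _ => False
  | s, .not φ => ¬ FOSat M s φ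
  | s, .and φ ψ => FOSat M s φ ∧ FOSat M s ψ
  | s, .or φ ψ => FOSat M s φ ∨ FOSat M s ψ
  | s, .ex x φ => ∃ a : M.Dom, FOSat M (Function.update s x a) φ
  | s, .all x φ => ∀ a : M.Dom, FOSat M (Function.update s x a) φ
  | s, .lab _ φ => FOSat M s φ

/-! ## The evaluation games -/

/-- A position of the semantic game: the current formula, the environment
recording for each label symbol `L` the reference formula `L ψ` it currently
names, the current assignment, and the polarity (`true` = `+`). -/
structure SCLPos (V : Vocab) (D : Type u) : Type u where
  form : SCLFormula V
  env : ℕ → Option (SCLFormula V)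
  asg : ℕ → D
  pol : Bool

/-- Which player moves at a given position. (At positions with at most one
successor the owner is irrelevant; we let Eloise own them.) -/
def posTurn {V : Vocab} {D : Type u} (p : SCLPos V D) : Player :=
  match p.form, p.pol with
  | .and _ _, true => .abelard
  | .and _ _, false => .eloise
  | .or _ _, true => .eloise
  | .or _ _, false => .abelard
  | .all _ _, true => .abelard
  | .all _ _, false => .eloise
  | .ex _ _, true => .eloise
  | .ex _ _, false => .abelard
  | _, _ => .eloise

/-- Who wins a play ending at a given position: at an FO-atom position,
Eloise wins iff the atom's truth value agrees with the polarity, and Abelard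
wins otherwise; plays ending anywhere else (e.g. at a claim symbol with no
reference formula, or with clock value 0) are won by neither player. -/
def posWin {V : Vocab} (M : Struct.{u} V) (p : SCLPos V M.Dom) : Player → Prop
  | .eloise => p.form.IsFOAtom ∧ (atomSat M p.asg p.form ↔ p.pol = true)
  | .abelard => p.form.IsFOAtom ∧ ¬ (atomSat M p.asg p.form ↔ p.pol = true)

/-- Moves of the unbounded evaluation game `G_∞`. -/
inductive UStep {V : Vocab} (M : Struct.{u} V) :
    SCLPos V M.Dom → SCLPos V M.Dom → Prop
  | neg (φ : SCLFormula V) (e : ℕ → Option (SCLFormula V)) (s : ℕ → M.Dom) (b : Bool) :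
      UStep M ⟨.not φ, e, s, b⟩ ⟨φ, e, s, !b⟩
  | andLeft (φ ψ : SCLFormula V) (e : ℕ → Option (SCLFormula V)) (s : ℕ → M.Dom) (b : Bool) :
      UStep M ⟨.and φ ψ, e, s, b⟩ ⟨φ, e, s, b⟩
  | andRight (φ ψ : SCLFormula V) (e : ℕ → Option (SCLFormula V)) (s : ℕ → M.Dom) (b : Bool) :
      UStep M ⟨.and φ ψ, e, s, b⟩ ⟨ψ, e, s, b⟩
  | orLeft (φ ψ : SCLFormula V) (e : ℕ → Option (SCLFormula V)) (s : ℕ → M.Dom) (b : Bool) :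
      UStep M ⟨.or φ ψ, e, s, b⟩ ⟨φ, e, s, b⟩
  | orRight (φ ψ : SCLFormula V) (e : ℕ → Option (SCLFormula V)) (s : ℕ → M.Dom) (b : Bool) :
      UStep M ⟨.or φ ψ, e, s, b⟩ ⟨ψ, e, s, b⟩
  | exStep (x : ℕ) (φ : SCLFormula V) (e : ℕ → Option (SCLFormula V)) (s : ℕ → M.Dom)
      (b : Bool) (a : M.Dom) :
      UStep M ⟨.ex x φ, e, s, b⟩ ⟨φ, e, Function.update s x a, b⟩
  | allStep (x : ℕ) (φ : SCLFormula V) (e : ℕ → Option (SCLFormula V)) (s : ℕ → M.Dom)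
      (b : Bool) (a : M.Dom) :
      UStep M ⟨.all x φ, e, s, b⟩ ⟨φ, e, Function.update s x a, b⟩
  | labStep (L : ℕ) (φ : SCLFormula V) (e : ℕ → Option (SCLFormula V)) (s : ℕ → M.Dom)
      (b : Bool) :
      UStep M ⟨.lab L φ, e, s, b⟩ ⟨φ, Function.update e L (some (.lab L φ)), s, b⟩
  | claimStep (L : ℕ) (e : ℕ → Option (SCLFormula V)) (s : ℕ → M.Dom) (b : Bool)
      (χ : SCLFormula V) (h : e L = some χ) :
      UStep M ⟨.claim L, e, s, b⟩ ⟨χ, e, s, b⟩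

/-- Moves of the `n`-bounded evaluation game: positions additionally carry a
clock value, which decreases by one exactly at jumps from a claim symbol to
its reference formula; a claim-symbol position with clock value `0` is a dead
end won by neither player. -/
inductive BStep {V : Vocab} (M : Struct.{u} V) :
    SCLPos V M.Dom × ℕ → SCLPos V M.Dom × ℕ → Prop
  | neg (φ : SCLFormula V) (e : ℕ → Option (SCLFormula V)) (s : ℕ → M.Dom) (b : Bool) (n : ℕ) :
      BStep M (⟨.not φ, e, s, b⟩, n) (⟨φ, e, s, !b⟩, n)
  | andLeft (φ ψ : SCLFormula V) (e : ℕ → Option (SCLFormula V)) (s : ℕ → M.Dom) (b : Bool)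
      (n : ℕ) : BStep M (⟨.and φ ψ, e, s, b⟩, n) (⟨φ, e, s, b⟩, n)
  | andRight (φ ψ : SCLFormula V) (e : ℕ → Option (SCLFormula V)) (s : ℕ → M.Dom) (b : Bool)
      (n : ℕ) : BStep M (⟨.and φ ψ, e, s, b⟩, n) (⟨ψ, e, s, b⟩, n)
  | orLeft (φ ψ : SCLFormula V) (e : ℕ → Option (SCLFormula V)) (s : ℕ → M.Dom) (b : Bool)
      (n : ℕ) : BStep M (⟨.or φ ψ, e, s, b⟩, n) (⟨φ, e, s, b⟩, n)
  | orRight (φ ψ : SCLFormula V) (e : ℕ → Option (SCLFormula V)) (s : ℕ → M.Dom) (b : Bool)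
      (n : ℕ) : BStep M (⟨.or φ ψ, e, s, b⟩, n) (⟨ψ, e, s, b⟩, n)
  | exStep (x : ℕ) (φ : SCLFormula V) (e : ℕ → Option (SCLFormula V)) (s : ℕ → M.Dom)
      (b : Bool) (n : ℕ) (a : M.Dom) :
      BStep M (⟨.ex x φ, e, s, b⟩, n) (⟨φ, e, Function.update s x a, b⟩, n)
  | allStep (x : ℕ) (φ : SCLFormula V) (e : ℕ → Option (SCLFormula V)) (s : ℕ → M.Dom)
      (b : Bool) (n : ℕ) (a : M.Dom) :
      BStep M (⟨.all x φ, e, s, b⟩, n) (⟨φ, e, Function.update s x a, b⟩, n)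
  | labStep (L : ℕ) (φ : SCLFormula V) (e : ℕ → Option (SCLFormula V)) (s : ℕ → M.Dom)
      (b : Bool) (n : ℕ) :
      BStep M (⟨.lab L φ, e, s, b⟩, n) (⟨φ, Function.update e L (some (.lab L φ)), s, b⟩, n)
  | claimStep (L : ℕ) (e : ℕ → Option (SCLFormula V)) (s : ℕ → M.Dom) (b : Bool)
      (χ : SCLFormula V) (n : ℕ) (h : e L = some χ) :
      BStep M (⟨.claim L, e, s, b⟩, n + 1) (⟨χ, e, s, b⟩, n)

/-- The unbounded evaluation game `G_∞(𝔄, ·, ·)` as a game arena. -/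
def gameU {V : Vocab} (M : Struct.{u} V) : GameArena (SCLPos V M.Dom) where
  turn := posTurn
  edge := UStep M
  win := posWin M

/-- The bounded evaluation games `G_n(𝔄, ·, ·)` (for all clock values `n`
simultaneously) as a game arena. -/
def gameB {V : Vocab} (M : Struct.{u} V) : GameArena (SCLPos V M.Dom × ℕ) where
  turn p := posTurn p.1
  edge := BStep M
  win p := posWin M p.1

/-- The initial position of the evaluation game for `φ` under assignment `s`:
empty environment and positive polarity. -/
def initPos {V : Vocab} {D : Type u} (φ : SCLFormula V) (s : ℕ → D) : SCLPos V D :=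
  ⟨φ, fun _ => none, s, true⟩

/-- Truth under the unbounded semantics (the logic SCL):
`𝔄,s ⊨ φ` iff Eloise has a winning strategy in `G_∞(𝔄,s,φ)`. -/
def SCLTrue {V : Vocab} (M : Struct.{u} V) (s : ℕ → M.Dom) (φ : SCLFormula V) : Prop :=
  (gameU M).HasWinningStrategy .eloise (initPos φ s)

/-! ### The bounded game `G_ω` -/

/-- Positions of the game `G_ω`: the initial position (where Abelard picks a
number `n'`), the intermediate positions (where Eloise picks some `n ≥ n'`),
and the positions of the `n`-bounded games. -/
inductive GOPos (V : Vocab) (D : Type u) : Type u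
  | start : GOPos V D
  | mid (n' : ℕ) : GOPos V D
  | inner (p : SCLPos V D) (clock : ℕ) : GOPos V D

inductive GOStep {V : Vocab} (M : Struct.{u} V) (φ : SCLFormula V) (s : ℕ → M.Dom) :
    GOPos V M.Dom → GOPos V M.Dom → Prop
  | abelardPick (n' : ℕ) : GOStep M φ s .start (.mid n')
  | eloisePick (n' n : ℕ) (h : n' ≤ n) : GOStep M φ s (.mid n') (.inner (initPos φ s) n)
  | play (p q : SCLPos V M.Dom) (m k : ℕ) (h : BStep M (p, m) (q, k)) :
      GOStep M φ s (.inner p m) (.inner q k)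

def goTurn {V : Vocab} {D : Type u} : GOPos V D → Player
  | .start => .abelard
  | .mid _ => .eloise
  | .inner p _ => posTurn p

def goWin {V : Vocab} (M : Struct.{u} V) : GOPos V M.Dom → Player → Prop
  | .inner p _, pl => posWin M p pl
  | _, _ => False

/-- The bounded evaluation game `G_ω(𝔄,s,φ)`: Abelard picks `n' ∈ ℕ`, then
Eloise picks `n ≥ n'`, and then `G_n(𝔄,s,φ)` is played. -/
def gameOmega {V : Vocab} (M : Struct.{u} V) (φ : SCLFormula V) (s : ℕ → M.Dom) :
    GameArena (GOPos V M.Dom) where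
  turn := goTurn
  edge := GOStep M φ s
  win := goWin M

/-- Truth under the bounded semantics (the logic BndSCL):
`𝔄,s ⊨_ω φ` iff Eloise has a winning strategy in `G_ω(𝔄,s,φ)`. -/
def BndTrue {V : Vocab} (M : Struct.{u} V) (s : ℕ → M.Dom) (φ : SCLFormula V) : Prop :=
  (gameOmega M φ s).HasWinningStrategy .eloise .start

/-! ## Approximants -/

/-- Auxiliary structural recursion for approximants: `k` tells what to put in
place of a claim symbol.  Label symbols are deleted (while updating the
environment), and polarity is tracked through negations. -/
def approxCore {V : Vocab}
    (k : (ℕ → Option (SCLFormula V)) → Bool → ℕ → SCLFormula V) :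
    (ℕ → Option (SCLFormula V)) → Bool → SCLFormula V → SCLFormula V
  | _, _, .bot => .bot
  | _, _, .eq x y => .eq x y
  | _, _, .rel R a => .rel R a
  | e, b, .claim L => k e b L
  | e, b, .not φ => .not (approxCore k e (!b) φ)
  | e, b, .and φ ψ => .and (approxCore k e b φ) (approxCore k e b ψ)
  | e, b, .or φ ψ => .or (approxCore k e b φ) (approxCore k e b ψ)
  | e, b, .ex x φ => .ex x (approxCore k e b φ)
  | e, b, .all x φ => .all x (approxCore k e b φ)
  | e, b, .lab L φ => approxCore k (Function.update e L (some (.lab L φ))) b φ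

/-- `approx n e b φ` unfolds each claim symbol of `φ` (in environment `e`,
under polarity `b`) through `n` jumps to reference formulas; claim symbols
reached with exhausted budget (or with no reference formula) are replaced by
`⊥` at positive occurrences and `⊤` (i.e. `¬⊥`) at negative occurrences, and
all label symbols are deleted. -/
def approx {V : Vocab} : ℕ → (ℕ → Option (SCLFormula V)) → Bool → SCLFormula V → SCLFormula V
  | 0 => approxCore fun _ b _ => if b then .bot else .not .bot
  | n + 1 => approxCore fun e b L =>
      match e L with
      | some χ => approx n e b χ
      | none => if b then .bot else .not .bot

/-- The `n`-th approximant `Φⁿ_φ` of `φ`: the first-order formula obtained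
from the `n`-th unfolding of `φ` by deleting all label symbols and replacing
positive claim occurrences by `⊥` and negative ones by `⊤`. -/
def approximant {V : Vocab} (φ : SCLFormula V) (n : ℕ) : SCLFormula V :=
  approx n (fun _ => none) true φ

/-! ## Vocabulary extensions, expansions and reducts -/

/-- The vocabulary `τ'` obtained from `V` by adding new relation symbols from
`N` (with arities `na`). -/
def extVocab (V : Vocab) (N : Type) (na : N → ℕ) : Vocab :=
  ⟨V.Rel ⊕ N, Sum.elim V.arity na⟩

/-- The expansion of a `V`-model `M` to an `extVocab V N na`-model, using `J`
to interpret the new relation symbols. -/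
def expand {V : Vocab} {N : Type} {na : N → ℕ} (M : Struct.{u} V)
    (J : ∀ n : N, (Fin (na n) → M.Dom) → Prop) : Struct.{u} (extVocab V N na) where
  Dom := M.Dom
  dom_nonempty := M.dom_nonempty
  interp := fun R =>
    match R with
    | Sum.inl r => M.interp r
    | Sum.inr n => J n

/-- The reduct `𝔄'↾τ` of an `extVocab V N na`-model to the vocabulary `V`. -/
def reduct {V : Vocab} {N : Type} {na : N → ℕ}
    (M' : Struct.{u} (extVocab V N na)) : Struct.{u} V where
  Dom := M'.Dom
  dom_nonempty := M'.dom_nonempty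
  interp := fun R => M'.interp (Sum.inl R)

/-- `φ` uses only the variables `0, …, k−1` (free or bound), i.e. it belongs
to the `k`-variable fragment. -/
def UsesVarsLt {V : Vocab} (k : ℕ) (φ : SCLFormula V) : Prop :=
  ∀ x ∈ φ.vars, x < k


/-! ## Auxiliary list lemmas -/

section ListAux

variable {α : Type u}

lemma prefix_snoc_cons {q t : List α} {y a : α} (h : (q ++ [y]) <+: (a :: t)) :
    (q = [] ∧ y = a) ∨ (∃ q', q = a :: q' ∧ (q' ++ [y]) <+: t) := by
  cases q with
  | nil => left; simpa [List.cons_prefix_cons] using h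
  | cons b q' =>
    right
    rw [List.cons_append, List.cons_prefix_cons] at h
    exact ⟨q', by rw [h.1], h.2⟩

lemma prefix_snoc_snoc {q w : List α} {y p' : α} (h : (q ++ [y]) <+: (w ++ [p'])) :
    (q ++ [y]) <+: w ∨ (q = w ∧ y = p') := by
  rcases lt_or_eq_of_le (by simpa using h.length_le) with hlt | heq
  · left
    exact List.prefix_of_prefix_length_le h (List.prefix_append w [p'])
      (by simpa using hlt)
  · right
    have := List.IsPrefix.eq_of_length h (by simpa using heq)
    have h2 := List.append_inj' this rfl
    exact ⟨h2.1, by simpa using h2.2⟩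

lemma getLast?_cons_of_ne_nil {a : α} {t : List α} (h : t ≠ []) :
    (a :: t).getLast? = t.getLast? := by
  cases t with
  | nil => exact absurd rfl h
  | cons b r => exact List.getLast?_cons_cons

lemma chain'_ofFn {R : α → α → Prop} {n : ℕ} {f : ℕ → α}
    (h : ∀ i, R (f i) (f (i + 1))) : List.Chain' R (List.ofFn fun i : Fin n => f i) := by
  refine List.isChain_iff_getElem.mpr ?_
  intro i hi
  simp only [List.get_eq_getElem, List.getElem_ofFn]
  exact h i

end ListAux

/-! ## Generic lemmas about winning strategies -/

namespace GameArena

variable {P : Type u} (A : GameArena P)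

lemma isWalkFrom_singleton (v : P) : A.IsWalkFrom v [v] := ⟨rfl, List.isChain_singleton v⟩

lemma IsWalkFrom.eq_cons {v : P} {w : List P} (h : A.IsWalkFrom v w) : w = v :: w.tail := by
  cases w with
  | nil => exact absurd h.1 (by simp)
  | cons a t =>
    obtain ⟨h1, _⟩ := h
    simp only [List.head?_cons, Option.some.injEq] at h1
    subst h1; rfl

lemma walk_from_deadEnd {p : P} {w : List P} (hd : A.DeadEnd p) (h : A.IsWalkFrom p w) :
    w = [p] := by
  have hc := h.eq_cons
  cases ht : w.tail with
  | nil => rw [hc, ht]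
  | cons a t =>
    exfalso
    have h2 := h.2
    rw [hc, ht] at h2
    exact hd a (List.isChain_cons_cons.mp h2).1

lemma hasWin_of_deadEnd {p : P} {pl : Player} (hd : A.DeadEnd p) (hw : A.win p pl) :
    A.HasWinningStrategy pl p := by
  refine ⟨fun _ => p, ?_, ?_, ?_⟩
  · intro w u hwalk hlast hturn hex
    have hwp : w = [p] := A.walk_from_deadEnd hd hwalk
    subst hwp
    simp only [List.getLast?_singleton, Option.some.injEq] at hlast
    subst hlast
    exact absurd hex.choose_spec (hd _)
  · intro w hplay _
    have hwp : w = [p] := A.walk_from_deadEnd hd hplay.1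
    subst hwp
    exact ⟨p, by simp, hw⟩
  · intro f hinf _
    exact hd _ (hinf.1 ▸ hinf.2 0)

open Classical in
noncomputable def fallback (q : P) (w : List P) : P :=
  match w.getLast? with
  | some u => if h : ∃ x, A.edge u x then h.choose else u
  | none => q

lemma fallback_edge {q u : P} {w : List P} (hlast : w.getLast? = some u)
    (hex : ∃ x, A.edge u x) : A.edge u (A.fallback q w) := by
  unfold fallback
  rw [hlast]
  simp only [dif_pos hex]
  exact hex.choose_spec

end GameArena

namespace GameArena

variable {P : Type u} (A : GameArena P)

open Classical in
noncomputable def shiftStrat (p q : P) (σ : List P → P) : List P → P :=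
  fun w =>
    if w = [p] then q
    else if A.IsWalkFrom q w.tail ∧ w.head? = some p then σ w.tail
    else A.fallback q w

lemma shiftStrat_base (p q : P) (σ : List P → P) : A.shiftStrat p q σ [p] = q := by
  simp [shiftStrat]

lemma shiftStrat_tail {p : P} {w : List P} (q : P) (σ : List P → P) (hne : w ≠ [p])
    (hw : A.IsWalkFrom q w.tail) (hh : w.head? = some p) :
    A.shiftStrat p q σ w = σ w.tail := by
  rw [shiftStrat, if_neg hne, if_pos ⟨hw, hh⟩]

lemma hasWin_of_edge {p q : P} {pl : Player} (ht : A.turn p = pl) (he : A.edge p q)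
    (h : A.HasWinningStrategy pl q) : A.HasWinningStrategy pl p := by
  obtain ⟨σ, hleg, hfin, hinf⟩ := h
  refine ⟨A.shiftStrat p q σ, ?_, ?_, ?_⟩
  · -- legality
    intro w u hwalk hlast hturn hex
    by_cases h1 : w = [p]
    · subst h1
      simp only [List.getLast?_singleton, Option.some.injEq] at hlast
      subst hlast
      rw [A.shiftStrat_base]
      exact he
    · have hc := hwalk.eq_cons
      by_cases h2 : A.IsWalkFrom q w.tail
      · rw [A.shiftStrat_tail q σ h1 h2 hwalk.1]
        refine hleg w.tail u h2 ?_ hturn hex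
        have htne : w.tail ≠ [] := by
          intro hn
          exact h1 (by rw [hc, hn])
        rw [hc, getLast?_cons_of_ne_nil htne] at hlast
        exact hlast
      · have hno : ¬ (A.IsWalkFrom q w.tail ∧ w.head? = some p) := fun hh => h2 hh.1
        rw [shiftStrat, if_neg h1, if_neg hno]
        exact A.fallback_edge hlast hex
  · -- finite plays
    intro w hplay hfol
    obtain ⟨hwalk, hde⟩ := hplay
    have hc := hwalk.eq_cons
    cases htl : w.tail with
    | nil =>
      exfalso
      have hwp : w = [p] := by rw [hc, htl]
      subst hwp
      exact hde p (by simp) q he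
    | cons x r =>
      have hwx : w = p :: x :: r := by rw [hc, htl]
      have hchain := hwalk.2
      rw [hwx] at hchain
      have hxq : x = q := by
        have h2 := hfol [p] p x (by rw [hwx]; exact ⟨r, rfl⟩) (by simp) ht
        rw [h2, A.shiftStrat_base]
      subst hxq
      have hwalkq : A.IsWalkFrom x (x :: r) := ⟨rfl, (List.isChain_cons_cons.mp hchain).2⟩
      have hlast : w.getLast? = (x :: r).getLast? := by
        rw [hwx]; exact getLast?_cons_of_ne_nil (by simp)
      have hfol2 : A.FollowsFin pl σ (x :: r) := by
        intro q' u' y hpre hlast' hturn'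
        have hq'ne : q' ≠ [] := by
          intro hn; rw [hn] at hlast'; simp at hlast'
        have hpre2 : (p :: q') ++ [y] <+: w := by
          rw [hwx]
          obtain ⟨t, hts⟩ := hpre
          exact ⟨t, by rw [List.cons_append, List.cons_append, hts]⟩
        have h3 := hfol (p :: q') u' y hpre2
          (by rw [getLast?_cons_of_ne_nil hq'ne]; exact hlast') hturn'
        rw [h3]
        have hwf : A.IsWalkFrom x (p :: q').tail := by
          have hh : q'.head? = some x := by
            cases q' with
            | nil => exact absurd rfl hq'ne
            | cons a q'' =>
              obtain ⟨t, hts⟩ := hpre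
              rw [List.cons_append] at hts
              have := (List.cons.inj hts).1
              simp [this]
          exact ⟨hh, hwalkq.2.prefix ((List.prefix_append q' [y]).trans hpre)⟩
        exact A.shiftStrat_tail x σ (by simp [hq'ne]) hwf (by simp)
      obtain ⟨u, hu, hwu⟩ := hfin (x :: r) ⟨hwalkq, fun u hu => hde u (hlast ▸ hu)⟩ hfol2
      exact ⟨u, hlast ▸ hu, hwu⟩
  · -- infinite plays
    intro f hif hfolf
    obtain ⟨hf0, hfe⟩ := hif
    have hf1 : f 1 = q := by
      have := hfolf 0 (by rw [hf0]; exact ht)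
      rw [this]
      have : (List.ofFn fun i : Fin 1 => f i) = [p] := by simp [hf0]
      rw [this, A.shiftStrat_base]
    refine hinf (fun n => f (n + 1)) ⟨hf1, fun n => hfe (n + 1)⟩ ?_
    intro n hturn
    have h4 := hfolf (n + 1) hturn
    have hofn : (List.ofFn fun i : Fin (n + 1 + 1) => f i) =
        p :: (List.ofFn fun i : Fin (n + 1) => f (i + 1)) := by
      rw [List.ofFn_succ]
      simp [hf0]
    have hwf : A.IsWalkFrom q (p :: (List.ofFn fun i : Fin (n + 1) => f (i + 1))).tail := by
      constructor
      · show (List.ofFn fun i : Fin (n + 1) => f (i + 1)).head? = some q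
        rw [List.ofFn_succ]
        simp [hf1]
      · exact chain'_ofFn (f := fun i => f (i + 1)) (fun i => hfe (i + 1))
    show f (n + 1 + 1) = σ (List.ofFn fun i : Fin (n + 1) => f (i + 1))
    rw [h4, hofn, A.shiftStrat_tail q σ (by simp) hwf (by simp)]
    rfl

open Classical in
noncomputable def combStrat (pl : Player) (p : P) : List P → P :=
  fun w =>
    match w with
    | _ :: x :: r =>
        if h : A.HasWinningStrategy pl x then h.choose (x :: r) else A.fallback p (x :: r)
    | w' => A.fallback p w'

open Classical in
lemma combStrat_cons_cons (pl : Player) (p a x : P) (r : List P) :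
    A.combStrat pl p (a :: x :: r) =
      if h : A.HasWinningStrategy pl x then h.choose (x :: r) else A.fallback p (x :: r) :=
  rfl

lemma hasWin_of_forall {p : P} {pl : Player} (ht : A.turn p ≠ pl) (hne : ∃ x, A.edge p x)
    (hall : ∀ q, A.edge p q → A.HasWinningStrategy pl q) : A.HasWinningStrategy pl p := by
  refine ⟨A.combStrat pl p, ?_, ?_, ?_⟩
  · -- legality
    intro w u hwalk hlast hturn hex
    have hc := hwalk.eq_cons
    cases htl : w.tail with
    | nil =>
      exfalso
      have hwp : w = [p] := by rw [hc, htl]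
      subst hwp
      simp only [List.getLast?_singleton, Option.some.injEq] at hlast
      subst hlast
      exact ht hturn
    | cons x r =>
      have hwx : w = p :: x :: r := by rw [hc, htl]
      have hchain := hwalk.2
      rw [hwx] at hchain
      have hpx : A.edge p x := (List.isChain_cons_cons.mp hchain).1
      have hwinx := hall x hpx
      have hstep : A.combStrat pl p w = hwinx.choose (x :: r) := by
        rw [hwx, A.combStrat_cons_cons, dif_pos hwinx]
      rw [hstep]
      refine hwinx.choose_spec.1 (x :: r) u ⟨rfl, (List.isChain_cons_cons.mp hchain).2⟩ ?_ hturn hex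
      rw [hwx, getLast?_cons_of_ne_nil (by simp)] at hlast
      exact hlast
  · -- finite plays
    intro w hplay hfol
    obtain ⟨hwalk, hde⟩ := hplay
    have hc := hwalk.eq_cons
    cases htl : w.tail with
    | nil =>
      exfalso
      have hwp : w = [p] := by rw [hc, htl]
      subst hwp
      obtain ⟨x, hx⟩ := hne
      exact hde p (by simp) x hx
    | cons x r =>
      have hwx : w = p :: x :: r := by rw [hc, htl]
      have hchain := hwalk.2
      rw [hwx] at hchain
      have hpx : A.edge p x := (List.isChain_cons_cons.mp hchain).1
      have hwinx := hall x hpx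
      obtain ⟨hlegx, hfinx, hinfx⟩ := hwinx.choose_spec
      have hlast : w.getLast? = (x :: r).getLast? := by
        rw [hwx]; exact getLast?_cons_of_ne_nil (by simp)
      have hfol2 : A.FollowsFin pl hwinx.choose (x :: r) := by
        intro q' u' y hpre hlast' hturn'
        have hq'ne : q' ≠ [] := by
          intro hn; rw [hn] at hlast'; simp at hlast'
        have hpre2 : (p :: q') ++ [y] <+: w := by
          rw [hwx]
          obtain ⟨t, hts⟩ := hpre
          exact ⟨t, by rw [List.cons_append, List.cons_append, hts]⟩
        have h3 := hfol (p :: q') u' y hpre2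
          (by rw [getLast?_cons_of_ne_nil hq'ne]; exact hlast') hturn'
        rw [h3]
        obtain ⟨a, q'', hq''⟩ : ∃ a q'', q' = a :: q'' := by
          cases q' with
          | nil => exact absurd rfl hq'ne
          | cons a q'' => exact ⟨a, q'', rfl⟩
        have hax : a = x := by
          obtain ⟨t, hts⟩ := hpre
          rw [hq''] at hts
          rw [List.cons_append] at hts
          exact (List.cons.inj hts).1
        rw [hq'', hax, A.combStrat_cons_cons, dif_pos hwinx]
      obtain ⟨u, hu, hwu⟩ := hfinx (x :: r)
        ⟨⟨rfl, (List.isChain_cons_cons.mp hchain).2⟩, fun u hu => hde u (hlast ▸ hu)⟩ hfol2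
      exact ⟨u, hlast ▸ hu, hwu⟩
  · -- infinite plays
    intro f hif hfolf
    obtain ⟨hf0, hfe⟩ := hif
    have hpx : A.edge p (f 1) := hf0 ▸ hfe 0
    have hwinx := hall (f 1) hpx
    obtain ⟨hlegx, hfinx, hinfx⟩ := hwinx.choose_spec
    refine hinfx (fun n => f (n + 1)) ⟨rfl, fun n => hfe (n + 1)⟩ ?_
    intro n hturn
    have h4 := hfolf (n + 1) hturn
    have hofn : (List.ofFn fun i : Fin (n + 1 + 1) => f i) =
        p :: f 1 :: (List.ofFn fun i : Fin n => f (i + 1 + 1)) := by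
      rw [List.ofFn_succ, List.ofFn_succ]
      simp [hf0]
    show f (n + 1 + 1) = hwinx.choose (List.ofFn fun i : Fin (n + 1) => f (i + 1))
    rw [h4, hofn, A.combStrat_cons_cons, dif_pos hwinx]
    rw [List.ofFn_succ]
    simp

lemma not_hasWin_succ_of_turn {p q : P} {pl : Player} (he : A.edge p q)
    (ht : A.turn p = pl) (h : ¬ A.HasWinningStrategy pl p) : ¬ A.HasWinningStrategy pl q :=
  fun hw => h (A.hasWin_of_edge ht he hw)

lemma exists_not_hasWin_of_turn_ne {p : P} {pl : Player} (ht : A.turn p ≠ pl)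
    (hne : ∃ x, A.edge p x) (h : ¬ A.HasWinningStrategy pl p) :
    ∃ q, A.edge p q ∧ ¬ A.HasWinningStrategy pl q := by
  by_contra hcon
  push_neg at hcon
  exact h (A.hasWin_of_forall ht hne hcon)

end GameArena

/-! ## Subformulas, labels, and the finite state space -/

namespace SCLFormula

variable {V : Vocab}

/-- The list of subformulas of a formula. -/
def subs : SCLFormula V → List (SCLFormula V)
  | .bot => [.bot]
  | .eq x y => [.eq x y]
  | .rel R a => [.rel R a]
  | .claim L => [.claim L]
  | .not ψ => .not ψ :: subs ψ
  | .and ψ χ => .and ψ χ :: (subs ψ ++ subs χ)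
  | .or ψ χ => .or ψ χ :: (subs ψ ++ subs χ)
  | .ex x ψ => .ex x ψ :: subs ψ
  | .all x ψ => .all x ψ :: subs ψ
  | .lab L ψ => .lab L ψ :: subs ψ

lemma self_mem_subs (φ : SCLFormula V) : φ ∈ subs φ := by
  cases φ <;> simp [subs]

lemma subs_trans {χ ψ φ : SCLFormula V} (h1 : χ ∈ subs ψ) : ψ ∈ subs φ → χ ∈ subs φ := by
  induction φ with
  | bot => intro h2; simp only [subs, List.mem_singleton] at h2 ⊢; subst h2; simpa [subs] using h1
  | eq x y => intro h2; simp only [subs, List.mem_singleton] at h2 ⊢; subst h2; simpa [subs] using h1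
  | rel R a => intro h2; simp only [subs, List.mem_singleton] at h2 ⊢; subst h2; simpa [subs] using h1
  | claim L => intro h2; simp only [subs, List.mem_singleton] at h2 ⊢; subst h2; simpa [subs] using h1
  | not ψ₁ ih =>
    intro h2
    simp only [subs, List.mem_cons] at h2 ⊢
    rcases h2 with rfl | h2
    · simpa [subs] using h1
    · exact Or.inr (ih h2)
  | and ψ₁ ψ₂ ih₁ ih₂ =>
    intro h2
    simp only [subs, List.mem_cons, List.mem_append] at h2 ⊢
    rcases h2 with rfl | h2 | h2
    · simpa [subs] using h1
    · exact Or.inr (Or.inl (ih₁ h2))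
    · exact Or.inr (Or.inr (ih₂ h2))
  | or ψ₁ ψ₂ ih₁ ih₂ =>
    intro h2
    simp only [subs, List.mem_cons, List.mem_append] at h2 ⊢
    rcases h2 with rfl | h2 | h2
    · simpa [subs] using h1
    · exact Or.inr (Or.inl (ih₁ h2))
    · exact Or.inr (Or.inr (ih₂ h2))
  | ex x ψ₁ ih =>
    intro h2
    simp only [subs, List.mem_cons] at h2 ⊢
    rcases h2 with rfl | h2
    · simpa [subs] using h1
    · exact Or.inr (ih h2)
  | all x ψ₁ ih =>
    intro h2
    simp only [subs, List.mem_cons] at h2 ⊢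
    rcases h2 with rfl | h2
    · simpa [subs] using h1
    · exact Or.inr (ih h2)
  | lab L ψ₁ ih =>
    intro h2
    simp only [subs, List.mem_cons] at h2 ⊢
    rcases h2 with rfl | h2
    · simpa [subs] using h1
    · exact Or.inr (ih h2)

lemma subs_child_not {ψ φ : SCLFormula V} (h : SCLFormula.not ψ ∈ subs φ) : ψ ∈ subs φ :=
  subs_trans (by simp [subs, self_mem_subs]) h

lemma subs_child_and_left {ψ χ φ : SCLFormula V} (h : SCLFormula.and ψ χ ∈ subs φ) :
    ψ ∈ subs φ :=
  subs_trans (by simp [subs, self_mem_subs]) h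

lemma subs_child_and_right {ψ χ φ : SCLFormula V} (h : SCLFormula.and ψ χ ∈ subs φ) :
    χ ∈ subs φ :=
  subs_trans (by simp [subs, self_mem_subs]) h

lemma subs_child_or_left {ψ χ φ : SCLFormula V} (h : SCLFormula.or ψ χ ∈ subs φ) :
    ψ ∈ subs φ :=
  subs_trans (by simp [subs, self_mem_subs]) h

lemma subs_child_or_right {ψ χ φ : SCLFormula V} (h : SCLFormula.or ψ χ ∈ subs φ) :
    χ ∈ subs φ :=
  subs_trans (by simp [subs, self_mem_subs]) h

lemma subs_child_ex {x : ℕ} {ψ φ : SCLFormula V} (h : SCLFormula.ex x ψ ∈ subs φ) :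
    ψ ∈ subs φ :=
  subs_trans (by simp [subs, self_mem_subs]) h

lemma subs_child_all {x : ℕ} {ψ φ : SCLFormula V} (h : SCLFormula.all x ψ ∈ subs φ) :
    ψ ∈ subs φ :=
  subs_trans (by simp [subs, self_mem_subs]) h

lemma subs_child_lab {L : ℕ} {ψ φ : SCLFormula V} (h : SCLFormula.lab L ψ ∈ subs φ) :
    ψ ∈ subs φ :=
  subs_trans (by simp [subs, self_mem_subs]) h

lemma vars_subset_of_mem_subs {ψ φ : SCLFormula V} (h : ψ ∈ subs φ) : ψ.vars ⊆ φ.vars := by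
  induction φ with
  | bot => simp only [subs, List.mem_singleton] at h; subst h; exact Finset.Subset.refl _
  | eq x y => simp only [subs, List.mem_singleton] at h; subst h; exact Finset.Subset.refl _
  | rel R a => simp only [subs, List.mem_singleton] at h; subst h; exact Finset.Subset.refl _
  | claim L => simp only [subs, List.mem_singleton] at h; subst h; exact Finset.Subset.refl _
  | not ψ₁ ih =>
    simp only [subs, List.mem_cons] at h
    rcases h with rfl | h
    · exact Finset.Subset.refl _
    · exact ih h
  | and ψ₁ ψ₂ ih₁ ih₂ =>
    simp only [subs, List.mem_cons, List.mem_append] at h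
    rcases h with rfl | h | h
    · exact Finset.Subset.refl _
    · exact (ih₁ h).trans Finset.subset_union_left
    · exact (ih₂ h).trans Finset.subset_union_right
  | or ψ₁ ψ₂ ih₁ ih₂ =>
    simp only [subs, List.mem_cons, List.mem_append] at h
    rcases h with rfl | h | h
    · exact Finset.Subset.refl _
    · exact (ih₁ h).trans Finset.subset_union_left
    · exact (ih₂ h).trans Finset.subset_union_right
  | ex x ψ₁ ih =>
    simp only [subs, List.mem_cons] at h
    rcases h with rfl | h
    · exact Finset.Subset.refl _
    · exact (ih h).trans (Finset.subset_insert _ _)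
  | all x ψ₁ ih =>
    simp only [subs, List.mem_cons] at h
    rcases h with rfl | h
    · exact Finset.Subset.refl _
    · exact (ih h).trans (Finset.subset_insert _ _)
  | lab L ψ₁ ih =>
    simp only [subs, List.mem_cons] at h
    rcases h with rfl | h
    · exact Finset.Subset.refl _
    · exact ih h

/-- The label symbols occurring (as labels) in a formula. -/
def labs : SCLFormula V → List ℕ
  | .bot => []
  | .eq _ _ => []
  | .rel _ _ => []
  | .claim _ => []
  | .not ψ => labs ψ
  | .and ψ χ => labs ψ ++ labs χ
  | .or ψ χ => labs ψ ++ labs χ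
  | .ex _ ψ => labs ψ
  | .all _ ψ => labs ψ
  | .lab L ψ => L :: labs ψ

lemma lab_mem_labs {L : ℕ} {ψ φ : SCLFormula V} (h : SCLFormula.lab L ψ ∈ subs φ) :
    L ∈ labs φ := by
  induction φ with
  | bot => simp [subs] at h
  | eq x y => simp [subs] at h
  | rel R a => simp [subs] at h
  | claim L' => simp [subs] at h
  | not ψ₁ ih => simp only [subs, List.mem_cons] at h; rcases h with h | h
                 · exact absurd h (by simp)
                 · exact ih h
  | and ψ₁ ψ₂ ih₁ ih₂ =>
    simp only [subs, List.mem_cons, List.mem_append] at h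
    rcases h with h | h | h
    · exact absurd h (by simp)
    · exact List.mem_append_left _ (ih₁ h)
    · exact List.mem_append_right _ (ih₂ h)
  | or ψ₁ ψ₂ ih₁ ih₂ =>
    simp only [subs, List.mem_cons, List.mem_append] at h
    rcases h with h | h | h
    · exact absurd h (by simp)
    · exact List.mem_append_left _ (ih₁ h)
    · exact List.mem_append_right _ (ih₂ h)
  | ex x ψ₁ ih => simp only [subs, List.mem_cons] at h; rcases h with h | h
                  · exact absurd h (by simp)
                  · exact ih h
  | all x ψ₁ ih => simp only [subs, List.mem_cons] at h; rcases h with h | h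
                   · exact absurd h (by simp)
                   · exact ih h
  | lab L' ψ₁ ih =>
    simp only [subs, List.mem_cons] at h
    rcases h with h | h
    · rw [lab.injEq] at h
      simp [labs, h.1]
    · exact List.mem_cons_of_mem _ (ih h)

end SCLFormula

open SCLFormula

/-- Subformulas of `φ`, as a (finite) type. -/
@[reducible] def Subf {V : Vocab} (φ : SCLFormula V) : Type := {ψ : SCLFormula V // ψ ∈ subs φ}

instance subf_finite {V : Vocab} (φ : SCLFormula V) : Finite (Subf φ) := by
  apply Finite.of_surjective
    (fun i : Fin (subs φ).length => (⟨(subs φ).get i, List.get_mem _ _⟩ : Subf φ))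
  rintro ⟨ψ, h⟩
  obtain ⟨i, hi⟩ := List.mem_iff_get.mp h
  exact ⟨i, Subtype.ext hi⟩

/-- Environments compatible with `φ`: supported on labels of `φ`, with values
labelled subformulas of `φ`. -/
def GoodEnv {V : Vocab} (φ : SCLFormula V) (e : ℕ → Option (SCLFormula V)) : Prop :=
  ∀ L, e L = none ∨
    (L ∈ labs φ ∧ ∃ ψ, e L = some (SCLFormula.lab L ψ) ∧ SCLFormula.lab L ψ ∈ subs φ)

@[reducible] def EnvT {V : Vocab} (φ : SCLFormula V) : Type := {e : ℕ → Option (SCLFormula V) // GoodEnv φ e}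

lemma goodEnv_none {V : Vocab} (φ : SCLFormula V) : GoodEnv φ (fun _ => none) :=
  fun _ => Or.inl rfl

lemma goodEnv_mem {V : Vocab} {φ : SCLFormula V} (e : EnvT φ) {L : ℕ} {χ : SCLFormula V}
    (h : e.1 L = some χ) : χ ∈ subs φ := by
  rcases e.2 L with h' | ⟨_, ψ, heq, hmem⟩
  · rw [h'] at h; cases h
  · rw [heq] at h
    obtain rfl : SCLFormula.lab L ψ = χ := Option.some.inj h
    exact hmem

lemma goodEnv_update {V : Vocab} {φ : SCLFormula V} (e : EnvT φ) {L : ℕ} {ψ : SCLFormula V}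
    (h : SCLFormula.lab L ψ ∈ subs φ) :
    GoodEnv φ (Function.update e.1 L (some (SCLFormula.lab L ψ))) := by
  intro L'
  by_cases hL : L' = L
  · subst hL
    right
    exact ⟨lab_mem_labs h, ψ, by rw [Function.update_self], h⟩
  · rw [Function.update_of_ne hL]
    exact e.2 L'

instance option_finite {X : Type u} [Finite X] : Finite (Option X) := by
  apply Finite.of_surjective (fun a : X ⊕ Unit => Sum.elim (fun x => some x) (fun _ => none) a)
  rintro (_ | x)
  · exact ⟨Sum.inr (), rfl⟩
  · exact ⟨Sum.inl x, rfl⟩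

instance envT_finite {V : Vocab} (φ : SCLFormula V) : Finite (EnvT φ) := by
  haveI : Finite {ψ : SCLFormula V // ψ ∈ subs φ} := subf_finite φ
  have key : ∀ (e : EnvT φ) (L : ℕ), ∀ a ∈ e.1 L, a ∈ subs φ := by
    intro e L a ha
    exact goodEnv_mem e ha
  apply Finite.of_injective
    (fun e : EnvT φ => fun i : Fin (labs φ).length =>
      Option.pmap (fun a h => (⟨a, h⟩ : Subf φ)) (e.1 ((labs φ).get i)) (key e _))
  intro e e' hee
  apply Subtype.ext
  funext L
  by_cases hL : L ∈ labs φ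
  · obtain ⟨i, hi⟩ := List.mem_iff_get.mp hL
    have h2 := congrArg (Option.map Subtype.val) (congrFun hee i)
    have pv : ∀ (o : Option (SCLFormula V)) (H : ∀ a ∈ o, a ∈ subs φ),
        Option.map Subtype.val (Option.pmap (fun a h => (⟨a, h⟩ : Subf φ)) o H) = o := by
      intro o H; cases o <;> rfl
    rw [pv, pv] at h2
    rw [hi] at h2
    exact h2
  · have h1 : e.1 L = none := by
      rcases e.2 L with h | ⟨hm, _⟩
      · exact h
      · exact absurd hm hL
    have h2 : e'.1 L = none := by
      rcases e'.2 L with h | ⟨hm, _⟩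
      · exact h
      · exact absurd hm hL
    rw [h1, h2]

/-- The finite state space: a subformula, a compatible environment, a polarity. -/
@[reducible] def SclState {V : Vocab} (φ : SCLFormula V) : Type := Subf φ × EnvT φ × Bool

instance sclState_finite {V : Vocab} (φ : SCLFormula V) : Finite (SclState φ) := by
  unfold SclState
  infer_instance

/-! ## The formula `Ψ` -/

section Formulas

variable {V : Vocab} (k : ℕ) (φ : SCLFormula V)

/-- The extended vocabulary: one `k`-ary relation symbol per state. -/
@[reducible] def tau' : Vocab := extVocab V (SclState φ) (fun _ => k)

/-- The atom `W_c(x₀,…,x_{k-1})`. -/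
def Wat (c : SclState φ) : SCLFormula (tau' k φ) :=
  .rel (Sum.inr c) (fun i => i.val)

/-- `⊤`. -/
def topF {V' : Vocab} : SCLFormula V' := .not .bot

open Classical in
/-- `W_c` for a candidate subformula (with a default when not a subformula). -/
noncomputable def Wq (χ : SCLFormula V) (e : EnvT φ) (b : Bool) : SCLFormula (tau' k φ) :=
  if h' : χ ∈ subs φ then Wat k φ (⟨χ, h'⟩, e, b) else topF

open Classical in
noncomputable def envUpd (e : EnvT φ) (L : ℕ) (ψ : SCLFormula V) : EnvT φ :=
  if h : GoodEnv φ (Function.update e.1 L (some (SCLFormula.lab L ψ))) then ⟨_, h⟩ else e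

/-- The matrix `δ_c` of the axiom for state `c`. -/
noncomputable def delta (ψc : SCLFormula V) (e : EnvT φ) (b : Bool) : SCLFormula (tau' k φ) :=
  match ψc with
  | .bot => cond b topF .bot
  | .eq x y => cond b (.not (.eq x y)) (.eq x y)
  | .rel R a => cond b (.not (.rel (Sum.inl R) a)) (.rel (Sum.inl R) a)
  | .claim L =>
    match e.1 L with
    | none => topF
    | some χ => Wq k φ χ e b
  | .not ψ => Wq k φ ψ e (!b)
  | .and ψ χ => cond b (.or (Wq k φ ψ e b) (Wq k φ χ e b)) (.and (Wq k φ ψ e b) (Wq k φ χ e b))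
  | .or ψ χ => cond b (.and (Wq k φ ψ e b) (Wq k φ χ e b)) (.or (Wq k φ ψ e b) (Wq k φ χ e b))
  | .ex x ψ => cond b (.all x (Wq k φ ψ e b)) (.ex x (Wq k φ ψ e b))
  | .all x ψ => cond b (.ex x (Wq k φ ψ e b)) (.all x (Wq k φ ψ e b))
  | .lab L ψ => Wq k φ ψ (envUpd φ e L ψ) b

/-- Universal closure over a list of variables. -/
def alls {V' : Vocab} (l : List ℕ) (ψ : SCLFormula V') : SCLFormula V' :=
  l.foldr .all ψ

/-- Finite conjunction. -/
def conjF {V' : Vocab} (l : List (SCLFormula V')) : SCLFormula V' :=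
  l.foldr .and topF

/-- The axiom for state `c`. -/
noncomputable def axFor (c : SclState φ) : SCLFormula (tau' k φ) :=
  alls (List.range k) (.or (.not (Wat k φ c)) (delta k φ c.1.1 c.2.1 c.2.2))

end Formulas

section FormulaLemmas

open SCLFormula

variable {V : Vocab} (k : ℕ) (φ : SCLFormula V)

lemma isFO_topF {V' : Vocab} : (topF (V' := V')).IsFO := trivial

lemma isFO_Wat (c : SclState φ) : (Wat k φ c).IsFO := trivial

lemma isFO_Wq (χ : SCLFormula V) (e : EnvT φ) (b : Bool) : (Wq k φ χ e b).IsFO := by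
  unfold Wq; split <;> trivial

lemma isFO_delta (ψc : SCLFormula V) (e : EnvT φ) (b : Bool) : (delta k φ ψc e b).IsFO := by
  cases ψc <;> cases b <;>
    simp only [delta, cond] <;>
    first
      | trivial
      | exact isFO_Wq ..
      | exact ⟨isFO_Wq .., isFO_Wq ..⟩
      | (split
         · trivial
         · exact isFO_Wq ..)

lemma vars_Wat (c : SclState φ) : ∀ x ∈ (Wat k φ c).vars, x < k := by
  intro x hx
  simp only [Wat, SCLFormula.vars, Finset.mem_image, Finset.mem_univ, true_and] at hx
  obtain ⟨i, rfl⟩ := hx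
  exact i.isLt

lemma vars_Wq (χ : SCLFormula V) (e : EnvT φ) (b : Bool) :
    ∀ x ∈ (Wq k φ χ e b).vars, x < k := by
  unfold Wq; split
  · exact vars_Wat k φ _
  · intro x hx; simp [topF, SCLFormula.vars] at hx

lemma vars_delta (hφ : UsesVarsLt k φ) {ψc : SCLFormula V} (hmem : ψc ∈ subs φ)
    (e : EnvT φ) (b : Bool) : ∀ x ∈ (delta k φ ψc e b).vars, x < k := by
  have hv : ∀ x ∈ ψc.vars, x < k := fun x hx => hφ x (vars_subset_of_mem_subs hmem hx)
  cases ψc with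
  | bot => cases b <;> (intro x hx; simp [delta, topF, SCLFormula.vars] at hx)
  | eq x y => cases b <;> exact hv
  | rel R a => cases b <;> exact hv
  | claim L =>
    simp only [delta]
    split
    · intro x hx; simp [topF, SCLFormula.vars] at hx
    · exact vars_Wq k φ _ _ _
  | not ψ => exact vars_Wq k φ _ _ _
  | and ψ χ =>
    cases b <;>
      (intro x hx
       rcases Finset.mem_union.mp hx with h | h
       · exact vars_Wq k φ _ _ _ x h
       · exact vars_Wq k φ _ _ _ x h)
  | or ψ χ =>
    cases b <;>
      (intro x hx
       rcases Finset.mem_union.mp hx with h | h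
       · exact vars_Wq k φ _ _ _ x h
       · exact vars_Wq k φ _ _ _ x h)
  | ex x ψ =>
    cases b <;>
      (intro z hz
       rcases Finset.mem_insert.mp hz with rfl | h
       · exact hv z (Finset.mem_insert_self _ _)
       · exact vars_Wq k φ _ _ _ z h)
  | all x ψ =>
    cases b <;>
      (intro z hz
       rcases Finset.mem_insert.mp hz with rfl | h
       · exact hv z (Finset.mem_insert_self _ _)
       · exact vars_Wq k φ _ _ _ z h)
  | lab L ψ => exact vars_Wq k φ _ _ _

lemma isFO_alls {V' : Vocab} (l : List ℕ) {ψ : SCLFormula V'} (h : ψ.IsFO) :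
    (alls l ψ).IsFO := by
  induction l with
  | nil => exact h
  | cons a t ih => exact ih

lemma vars_alls {V' : Vocab} (l : List ℕ) (ψ : SCLFormula V') :
    ∀ x ∈ (alls l ψ).vars, x ∈ l ∨ x ∈ ψ.vars := by
  induction l with
  | nil => exact fun x hx => Or.inr hx
  | cons a t ih =>
    intro x hx
    rcases Finset.mem_insert.mp hx with rfl | h
    · exact Or.inl (List.mem_cons_self)
    · rcases ih x h with h | h
      · exact Or.inl (List.mem_cons_of_mem _ h)
      · exact Or.inr h

lemma isFO_conjF {V' : Vocab} (l : List (SCLFormula V')) (h : ∀ ψ ∈ l, ψ.IsFO) :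
    (conjF l).IsFO := by
  induction l with
  | nil => exact trivial
  | cons a t ih =>
    exact ⟨h a (List.mem_cons_self), ih fun ψ hψ => h ψ (List.mem_cons_of_mem _ hψ)⟩

lemma vars_conjF {V' : Vocab} (l : List (SCLFormula V')) :
    ∀ x ∈ (conjF l).vars, ∃ ψ ∈ l, x ∈ ψ.vars := by
  induction l with
  | nil => intro x hx; simp [conjF, topF, SCLFormula.vars] at hx
  | cons a t ih =>
    intro x hx
    rcases Finset.mem_union.mp hx with h | h
    · exact ⟨a, List.mem_cons_self, h⟩
    · obtain ⟨ψ, hψ, hx'⟩ := ih x h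
      exact ⟨ψ, List.mem_cons_of_mem _ hψ, hx'⟩

lemma FOSat_topF {V' : Vocab} (M : Struct.{u} V') (s : ℕ → M.Dom) : FOSat M s topF := by
  simp [topF, FOSat]

lemma FOSat_conjF {V' : Vocab} (M : Struct.{u} V') (s : ℕ → M.Dom)
    (l : List (SCLFormula V')) : FOSat M s (conjF l) ↔ ∀ ψ ∈ l, FOSat M s ψ := by
  induction l with
  | nil => simp [conjF, topF, FOSat]
  | cons a t ih =>
    show FOSat M s a ∧ FOSat M s (conjF t) ↔ _
    rw [ih]
    simp

lemma FOSat_alls_intro {V' : Vocab} (M : Struct.{u} V') {ψ : SCLFormula V'}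
    (h : ∀ s, FOSat M s ψ) : ∀ (l : List ℕ) (s : ℕ → M.Dom), FOSat M s (alls l ψ) := by
  intro l
  induction l with
  | nil => exact h
  | cons a t ih =>
    intro s
    exact fun v => ih (Function.update s a v)

lemma FOSat_alls_elim {V' : Vocab} (M : Struct.{u} V') {ψ : SCLFormula V'} :
    ∀ (l : List ℕ) (s : ℕ → M.Dom), FOSat M s (alls l ψ) →
      ∀ s', (∀ x, x ∉ l → s' x = s x) → FOSat M s' ψ := by
  intro l
  induction l with
  | nil =>
    intro s h s' hs'
    have : s' = s := funext fun x => hs' x List.not_mem_nil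
    rwa [this]
  | cons a t ih =>
    intro s h s' hs'
    have h2 : FOSat M (Function.update s a (s' a)) (alls t ψ) := h (s' a)
    refine ih _ h2 s' ?_
    intro x hx
    by_cases hxa : x = a
    · subst hxa; rw [Function.update_self]
    · rw [Function.update_of_ne hxa]
      exact hs' x fun hm => hx ((List.mem_cons.mp hm).resolve_left hxa)

lemma FOSat_Wat {M : Struct.{u} (tau' k φ)} {s : ℕ → M.Dom} {c : SclState φ} :
    FOSat M s (Wat k φ c) ↔ M.interp (Sum.inr c) (fun i => s i.val) := Iff.rfl

end FormulaLemmas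

/-! ## Direction (1): the canonical expansion satisfies the axioms -/

section Direction1

open SCLFormula GameArena

variable {V : Vocab} (k : ℕ) (φ : SCLFormula V)

lemma Wq_pos {χ : SCLFormula V} (h : χ ∈ subs φ) (e : EnvT φ) (b : Bool) :
    Wq k φ χ e b = Wat k φ (⟨χ, h⟩, e, b) := dif_pos h

lemma envUpd_eq {L : ℕ} {ψ : SCLFormula V} (e : EnvT φ) (h : SCLFormula.lab L ψ ∈ subs φ) :
    envUpd φ e L ψ = ⟨Function.update e.1 L (some (SCLFormula.lab L ψ)), goodEnv_update e h⟩ :=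
  dif_pos (goodEnv_update e h)

/-- The canonical interpretation of the new relation symbols. -/
def canonJ (M : Struct.{u} V) : ∀ c : SclState φ, (Fin k → M.Dom) → Prop := fun c t =>
  ∃ s' : ℕ → M.Dom, (∀ i : Fin k, s' i.val = t i) ∧
    ¬ (gameU M).HasWinningStrategy .eloise ⟨c.1.1, c.2.1.1, s', c.2.2⟩

lemma noWin_atom_aux (M : Struct.{u} V) (ψa : SCLFormula V)
    (e : ℕ → Option (SCLFormula V)) (t : ℕ → M.Dom) (b : Bool)
    (hde : ∀ q, ¬ UStep M ⟨ψa, e, t, b⟩ q) (hatom : ψa.IsFOAtom)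
    (hiff : atomSat M t ψa ↔ b = true) :
    (gameU M).HasWinningStrategy .eloise ⟨ψa, e, t, b⟩ :=
  (gameU M).hasWin_of_deadEnd hde ⟨hatom, hiff⟩

lemma delta_sound (hφ : UsesVarsLt k φ) (M : Struct.{u} V) {ψc : SCLFormula V}
    (hmem : ψc ∈ subs φ) (e : EnvT φ) (b : Bool) (s₀ : ℕ → M.Dom)
    (hprem : ∃ s' : ℕ → M.Dom, (∀ i : Fin k, s' i.val = s₀ i.val) ∧
      ¬ (gameU M).HasWinningStrategy .eloise ⟨ψc, e.1, s', b⟩) :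
    FOSat (expand M (canonJ k φ M)) s₀ (delta k φ ψc e b) := by
  obtain ⟨s', hag, hnw⟩ := hprem
  have hv : ∀ z ∈ ψc.vars, z < k := fun z hz => hφ z (vars_subset_of_mem_subs hmem hz)
  have hagv : ∀ z, z < k → s' z = s₀ z := fun z hz => hag ⟨z, hz⟩
  cases ψc with
  | bot =>
    cases b with
    | true => exact FOSat_topF _ _
    | false =>
      simp only [delta, cond, FOSat]
      exact absurd (noWin_atom_aux M .bot e.1 s' false (fun q h => by cases h) trivial
        (by simp [atomSat])) hnw
  | eq x y =>
    have hx : x < k := hv x (by simp [SCLFormula.vars])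
    have hy : y < k := hv y (by simp [SCLFormula.vars])
    cases b with
    | true =>
      simp only [delta, cond, FOSat]
      intro heq
      refine hnw (noWin_atom_aux M (.eq x y) e.1 s' true (fun q h => by cases h) trivial ?_)
      have : s' x = s' y := by rw [hagv x hx, hagv y hy]; exact heq
      simpa [atomSat] using this
    | false =>
      simp only [delta, cond, FOSat]
      by_contra hne
      refine hnw (noWin_atom_aux M (.eq x y) e.1 s' false (fun q h => by cases h) trivial ?_)
      have : ¬ (s' x = s' y) := by rw [hagv x hx, hagv y hy]; exact hne
      simpa [atomSat] using this
  | rel R a =>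
    have hak : ∀ i, a i < k := fun i => hv (a i) (by simp [SCLFormula.vars])
    have hfe : (fun i => s' (a i)) = fun i => s₀ (a i) := funext fun i => hagv (a i) (hak i)
    cases b with
    | true =>
      simp only [delta, cond, FOSat]
      intro hR
      refine hnw (noWin_atom_aux M (.rel R a) e.1 s' true (fun q h => by cases h) trivial ?_)
      have : M.interp R (fun i => s' (a i)) := by rw [hfe]; exact hR
      simpa [atomSat] using this
    | false =>
      simp only [delta, cond, FOSat]
      by_contra hR
      refine hnw (noWin_atom_aux M (.rel R a) e.1 s' false (fun q h => by cases h) trivial ?_)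
      have : ¬ M.interp R (fun i => s' (a i)) := by rw [hfe]; exact hR
      simpa [atomSat] using this
  | claim L =>
    simp only [delta]
    split
    · exact FOSat_topF _ _
    · next χ hL =>
      rw [Wq_pos k φ (goodEnv_mem e hL)]
      exact ⟨s', hag, (gameU M).not_hasWin_succ_of_turn (UStep.claimStep L e.1 s' b χ hL) rfl hnw⟩
  | not ψ =>
    simp only [delta]
    rw [Wq_pos k φ (subs_child_not hmem)]
    exact ⟨s', hag, (gameU M).not_hasWin_succ_of_turn (UStep.neg ψ e.1 s' b) rfl hnw⟩
  | and ψ χ =>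
    cases b with
    | true =>
      simp only [delta, cond]
      obtain ⟨q, hq, hnwq⟩ := (gameU M).exists_not_hasWin_of_turn_ne
        (fun h => Player.noConfusion h) ⟨_, UStep.andLeft ψ χ e.1 s' true⟩ hnw
      cases hq with
      | andLeft =>
        exact Or.inl (by rw [Wq_pos k φ (subs_child_and_left hmem)]; exact ⟨s', hag, hnwq⟩)
      | andRight =>
        exact Or.inr (by rw [Wq_pos k φ (subs_child_and_right hmem)]; exact ⟨s', hag, hnwq⟩)
    | false =>
      simp only [delta, cond]
      constructor
      · rw [Wq_pos k φ (subs_child_and_left hmem)]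
        exact ⟨s', hag, (gameU M).not_hasWin_succ_of_turn (UStep.andLeft ψ χ e.1 s' false) rfl hnw⟩
      · rw [Wq_pos k φ (subs_child_and_right hmem)]
        exact ⟨s', hag, (gameU M).not_hasWin_succ_of_turn (UStep.andRight ψ χ e.1 s' false) rfl hnw⟩
  | or ψ χ =>
    cases b with
    | true =>
      simp only [delta, cond]
      constructor
      · rw [Wq_pos k φ (subs_child_or_left hmem)]
        exact ⟨s', hag, (gameU M).not_hasWin_succ_of_turn (UStep.orLeft ψ χ e.1 s' true) rfl hnw⟩
      · rw [Wq_pos k φ (subs_child_or_right hmem)]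
        exact ⟨s', hag, (gameU M).not_hasWin_succ_of_turn (UStep.orRight ψ χ e.1 s' true) rfl hnw⟩
    | false =>
      simp only [delta, cond]
      obtain ⟨q, hq, hnwq⟩ := (gameU M).exists_not_hasWin_of_turn_ne
        (fun h => Player.noConfusion h) ⟨_, UStep.orLeft ψ χ e.1 s' false⟩ hnw
      cases hq with
      | orLeft =>
        exact Or.inl (by rw [Wq_pos k φ (subs_child_or_left hmem)]; exact ⟨s', hag, hnwq⟩)
      | orRight =>
        exact Or.inr (by rw [Wq_pos k φ (subs_child_or_right hmem)]; exact ⟨s', hag, hnwq⟩)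
  | ex x ψ =>
    have hxk : x < k := hv x (Finset.mem_insert_self _ _)
    have hupd : ∀ (v : M.Dom) (i : Fin k),
        Function.update s' x v i.val = Function.update s₀ x v i.val := by
      intro v i
      by_cases hix : (i : ℕ) = x
      · rw [hix, Function.update_self, Function.update_self]
      · rw [Function.update_of_ne hix, Function.update_of_ne hix]
        exact hag i
    cases b with
    | true =>
      simp only [delta, cond, FOSat]
      intro v
      rw [Wq_pos k φ (subs_child_ex hmem)]
      exact ⟨Function.update s' x v, hupd v, (gameU M).not_hasWin_succ_of_turn (UStep.exStep x ψ e.1 s' true v) rfl hnw⟩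
    | false =>
      simp only [delta, cond, FOSat]
      obtain ⟨a⟩ := M.dom_nonempty
      obtain ⟨q, hq, hnwq⟩ := (gameU M).exists_not_hasWin_of_turn_ne
        (fun h => Player.noConfusion h) ⟨_, UStep.exStep x ψ e.1 s' false a⟩ hnw
      cases hq with
      | exStep _ _ _ _ _ v =>
        refine ⟨v, ?_⟩
        rw [Wq_pos k φ (subs_child_ex hmem)]
        exact ⟨Function.update s' x v, hupd v, hnwq⟩
  | all x ψ =>
    have hxk : x < k := hv x (Finset.mem_insert_self _ _)
    have hupd : ∀ (v : M.Dom) (i : Fin k),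
        Function.update s' x v i.val = Function.update s₀ x v i.val := by
      intro v i
      by_cases hix : (i : ℕ) = x
      · rw [hix, Function.update_self, Function.update_self]
      · rw [Function.update_of_ne hix, Function.update_of_ne hix]
        exact hag i
    cases b with
    | true =>
      simp only [delta, cond, FOSat]
      obtain ⟨a⟩ := M.dom_nonempty
      obtain ⟨q, hq, hnwq⟩ := (gameU M).exists_not_hasWin_of_turn_ne
        (fun h => Player.noConfusion h) ⟨_, UStep.allStep x ψ e.1 s' true a⟩ hnw
      cases hq with
      | allStep _ _ _ _ _ v =>
        refine ⟨v, ?_⟩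
        rw [Wq_pos k φ (subs_child_all hmem)]
        exact ⟨Function.update s' x v, hupd v, hnwq⟩
    | false =>
      simp only [delta, cond, FOSat]
      intro v
      rw [Wq_pos k φ (subs_child_all hmem)]
      exact ⟨Function.update s' x v, hupd v, (gameU M).not_hasWin_succ_of_turn (UStep.allStep x ψ e.1 s' false v) rfl hnw⟩
  | lab L ψ =>
    simp only [delta]
    rw [envUpd_eq φ e hmem, Wq_pos k φ (subs_child_lab hmem)]
    exact ⟨s', hag, (gameU M).not_hasWin_succ_of_turn (UStep.labStep L ψ e.1 s' b) rfl hnw⟩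

lemma axFor_sound (hφ : UsesVarsLt k φ) (M : Struct.{u} V) (c : SclState φ)
    (s : ℕ → M.Dom) : FOSat (expand M (canonJ k φ M)) s (axFor k φ c) := by
  apply FOSat_alls_intro
  intro s₀
  by_cases h : FOSat (expand M (canonJ k φ M)) s₀ (Wat k φ c)
  · exact Or.inr (delta_sound k φ hφ M c.1.2 c.2.1 c.2.2 s₀ h)
  · exact Or.inl h

end Direction1

/-! ## Direction (2): from a model of `Ψ`, Eloise has no winning strategy -/

section Direction2

open SCLFormula GameArena

variable {V : Vocab} (k : ℕ) (φ : SCLFormula V)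
variable (M' : Struct.{u} (tau' k φ)) (s : ℕ → M'.Dom)

/-- The invariant maintained along the constructed play. -/
def SclInv (σ : List (SCLPos V M'.Dom) → SCLPos V M'.Dom) (w : List (SCLPos V M'.Dom)) : Prop :=
  (gameU (reduct M')).IsWalkFrom (initPos φ s) w ∧
  (gameU (reduct M')).FollowsFin .eloise σ w ∧
  ∃ (c : SclState φ) (t : ℕ → M'.Dom),
    w.getLast? = some ⟨c.1.1, c.2.1.1, t, c.2.2⟩ ∧
    M'.interp (Sum.inr c) (fun i : Fin k => t i.val) ∧
    ∀ x, k ≤ x → t x = s x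

lemma inv_init (σ : List (SCLPos V M'.Dom) → SCLPos V M'.Dom)
    (hinit : M'.interp (Sum.inr ((⟨φ, self_mem_subs φ⟩, ⟨fun _ => none, goodEnv_none φ⟩, true) :
      SclState φ)) (fun i : Fin k => s i.val)) :
    SclInv k φ M' s σ [initPos φ s] := by
  refine ⟨(gameU (reduct M')).isWalkFrom_singleton _, ?_, ?_⟩
  · intro q u y hpre hlastq hturn
    exfalso
    have hlen := hpre.length_le
    simp at hlen
    change q.length < 1 at hlen
    obtain rfl : q = [] := List.eq_nil_of_length_eq_zero (by omega)
    simp at hlastq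
  · exact ⟨(⟨φ, self_mem_subs φ⟩, ⟨fun _ => none, goodEnv_none φ⟩, true), s, rfl, hinit,
      fun x _ => rfl⟩

lemma inv_step (hφ : UsesVarsLt k φ)
    (hax : ∀ (c : SclState φ) (s₀ : ℕ → M'.Dom), (∀ x, k ≤ x → s₀ x = s x) →
      M'.interp (Sum.inr c) (fun i : Fin k => s₀ i.val) →
      FOSat M' s₀ (delta k φ c.1.1 c.2.1 c.2.2))
    (σ : List (SCLPos V M'.Dom) → SCLPos V M'.Dom)
    (hws : (gameU (reduct M')).WinningStrategy .eloise (initPos φ s) σ)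
    (w : List (SCLPos V M'.Dom)) (hI : SclInv k φ M' s σ w) :
    ∃ p', SclInv k φ M' s σ (w ++ [p']) := by
  obtain ⟨hwalk, hfol, c, t, hlast, hint, htail⟩ := hI
  obtain ⟨⟨ψc, hmem⟩, e, b⟩ := c
  have hδ := hax (⟨ψc, hmem⟩, e, b) t htail hint
  have hv : ∀ z ∈ ψc.vars, z < k := fun z hz => hφ z (vars_subset_of_mem_subs hmem hz)
  -- the extension principle
  have extend : ∀ p' : SCLPos V M'.Dom,
      UStep (reduct M') ⟨ψc, e.1, t, b⟩ p' →
      (posTurn (⟨ψc, e.1, t, b⟩ : SCLPos V M'.Dom) = .eloise → p' = σ w) →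
      (∃ (c' : SclState φ) (t' : ℕ → M'.Dom),
        p' = ⟨c'.1.1, c'.2.1.1, t', c'.2.2⟩ ∧
        M'.interp (Sum.inr c') (fun i : Fin k => t' i.val) ∧
        ∀ x, k ≤ x → t' x = s x) →
      SclInv k φ M' s σ (w ++ [p']) := by
    intro p' hedge hsig hstate
    refine ⟨⟨?_, ?_⟩, ?_, ?_⟩
    · erw [List.head?_append_of_ne_nil]
      · exact hwalk.1
      · intro h; rw [h] at hlast; cases hlast
    · refine List.isChain_append.mpr ⟨hwalk.2, List.isChain_singleton _, ?_⟩
      intro x hx y hy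
      simp only [List.head?_cons, Option.mem_def, Option.some.injEq] at hy
      change some p' = some y at hy
      obtain rfl := Option.some.inj hy
      erw [Option.mem_def, hlast, Option.some.injEq] at hx
      subst hx
      exact hedge
    · intro q u y hpre hlastq hturn
      rcases prefix_snoc_snoc hpre with h | ⟨rfl, rfl⟩
      · exact hfol q u y h hlastq hturn
      · erw [hlast] at hlastq
        obtain rfl := Option.some.inj hlastq
        exact hsig hturn
    · obtain ⟨c', t', hp', hint', htail'⟩ := hstate
      refine ⟨c', t', ?_, hint', htail'⟩
      rw [List.getLast?_append_cons, List.getLast?_singleton, hp']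
  -- the dead-end principle
  have deadCase : (gameU (reduct M')).DeadEnd ⟨ψc, e.1, t, b⟩ →
      ((gameU (reduct M')).win (⟨ψc, e.1, t, b⟩ : SCLPos V M'.Dom) Player.eloise → False) →
      ∃ p', SclInv k φ M' s σ (w ++ [p']) := by
    intro hde hbad
    exfalso
    have hde' : ∀ u, w.getLast? = some u → (gameU (reduct M')).DeadEnd u := by
      intro u hu
      rw [hlast] at hu
      obtain rfl := Option.some.inj hu
      exact hde
    obtain ⟨u, hu, hwin⟩ := hws.2.1 w ⟨hwalk, hde'⟩ hfol
    erw [hlast] at hu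
    obtain rfl := Option.some.inj hu
    exact hbad hwin
  cases ψc with
  | bot =>
    refine deadCase (fun q h => by cases h) ?_
    rintro ⟨hatom, hiff⟩
    cases b with
    | true => exact (by cases hiff.mpr rfl : False)
    | false => simp only [delta, cond, FOSat] at hδ
  | eq x y =>
    refine deadCase (fun q h => by cases h) ?_
    rintro ⟨hatom, hiff⟩
    cases b with
    | true =>
      simp only [delta, cond, FOSat] at hδ
      exact hδ (hiff.mpr rfl)
    | false =>
      simp only [delta, cond, FOSat] at hδ
      cases hiff.mp hδ
  | rel R a =>
    refine deadCase (fun q h => by cases h) ?_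
    rintro ⟨hatom, hiff⟩
    cases b with
    | true =>
      simp only [delta, cond, FOSat] at hδ
      exact hδ (hiff.mpr rfl)
    | false =>
      simp only [delta, cond, FOSat] at hδ
      cases hiff.mp hδ
  | claim L =>
    cases hL : e.1 L with
    | none =>
      refine deadCase ?_ ?_
      · intro q h
        cases h
        rename_i χ hsome
        rw [hL] at hsome
        cases hsome
      · rintro ⟨hatom, _⟩
        exact hatom
    | some χ =>
      have hedge := hws.1 w _ hwalk hlast rfl ⟨_, UStep.claimStep (M := reduct M') L e.1 t b χ hL⟩
      obtain ⟨q, hsw⟩ : ∃ q : SCLPos V (reduct M').Dom, σ w = q := ⟨_, rfl⟩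
      rw [hsw] at hedge
      change UStep (reduct M') (SCLPos.mk (D := (reduct M').Dom) _ _ _ _) q at hedge
      cases hedge
      rename_i χ' hsome
      rw [hL] at hsome
      obtain rfl := Option.some.inj hsome
      refine ⟨_, extend _ (UStep.claimStep (M := reduct M') L e.1 t b χ hL) (fun _ => hsw.symm) ?_⟩
      refine ⟨(⟨χ, goodEnv_mem e hL⟩, e, b), t, rfl, ?_, htail⟩
      have hδ' : FOSat M' t (Wq k φ χ e b) := by
        simp only [delta] at hδ
        rw [hL] at hδ
        exact hδ
      rw [Wq_pos k φ (goodEnv_mem e hL)] at hδ'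
      exact hδ'
  | not ψ =>
    have hedge := hws.1 w _ hwalk hlast rfl ⟨_, UStep.neg (M := reduct M') ψ e.1 t b⟩
    obtain ⟨q, hsw⟩ : ∃ q : SCLPos V (reduct M').Dom, σ w = q := ⟨_, rfl⟩
    rw [hsw] at hedge
    change UStep (reduct M') (SCLPos.mk (D := (reduct M').Dom) _ _ _ _) q at hedge
    cases hedge
    refine ⟨_, extend _ (UStep.neg (M := reduct M') ψ e.1 t b) (fun _ => hsw.symm) ?_⟩
    refine ⟨(⟨ψ, subs_child_not hmem⟩, e, !b), t, rfl, ?_, htail⟩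
    simp only [delta] at hδ
    rw [Wq_pos k φ (subs_child_not hmem)] at hδ
    exact hδ
  | and ψ χ =>
    cases b with
    | true =>
      simp only [delta, cond] at hδ
      rw [Wq_pos k φ (subs_child_and_left hmem), Wq_pos k φ (subs_child_and_right hmem)] at hδ
      cases hδ with
      | inl h =>
        refine ⟨_, extend _ (UStep.andLeft (M := reduct M') ψ χ e.1 t true)
          (fun hh => absurd hh (fun hh' => Player.noConfusion hh')) ?_⟩
        exact ⟨(⟨ψ, subs_child_and_left hmem⟩, e, true), t, rfl, h, htail⟩
      | inr h =>
        refine ⟨_, extend _ (UStep.andRight (M := reduct M') ψ χ e.1 t true)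
          (fun hh => absurd hh (fun hh' => Player.noConfusion hh')) ?_⟩
        exact ⟨(⟨χ, subs_child_and_right hmem⟩, e, true), t, rfl, h, htail⟩
    | false =>
      simp only [delta, cond] at hδ
      rw [Wq_pos k φ (subs_child_and_left hmem), Wq_pos k φ (subs_child_and_right hmem)] at hδ
      have hedge := hws.1 w _ hwalk hlast rfl ⟨_, UStep.andLeft (M := reduct M') ψ χ e.1 t false⟩
      obtain ⟨q, hsw⟩ : ∃ q : SCLPos V (reduct M').Dom, σ w = q := ⟨_, rfl⟩
      rw [hsw] at hedge
      change UStep (reduct M') (SCLPos.mk (D := (reduct M').Dom) _ _ _ _) q at hedge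
      cases hedge with
      | andLeft =>
        refine ⟨_, extend _ (UStep.andLeft (M := reduct M') ψ χ e.1 t false) (fun _ => hsw.symm) ?_⟩
        exact ⟨(⟨ψ, subs_child_and_left hmem⟩, e, false), t, rfl, hδ.1, htail⟩
      | andRight =>
        refine ⟨_, extend _ (UStep.andRight (M := reduct M') ψ χ e.1 t false) (fun _ => hsw.symm) ?_⟩
        exact ⟨(⟨χ, subs_child_and_right hmem⟩, e, false), t, rfl, hδ.2, htail⟩
  | or ψ χ =>
    cases b with
    | true =>
      simp only [delta, cond] at hδ
      rw [Wq_pos k φ (subs_child_or_left hmem), Wq_pos k φ (subs_child_or_right hmem)] at hδ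
      have hedge := hws.1 w _ hwalk hlast rfl ⟨_, UStep.orLeft (M := reduct M') ψ χ e.1 t true⟩
      obtain ⟨q, hsw⟩ : ∃ q : SCLPos V (reduct M').Dom, σ w = q := ⟨_, rfl⟩
      rw [hsw] at hedge
      change UStep (reduct M') (SCLPos.mk (D := (reduct M').Dom) _ _ _ _) q at hedge
      cases hedge with
      | orLeft =>
        refine ⟨_, extend _ (UStep.orLeft (M := reduct M') ψ χ e.1 t true) (fun _ => hsw.symm) ?_⟩
        exact ⟨(⟨ψ, subs_child_or_left hmem⟩, e, true), t, rfl, hδ.1, htail⟩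
      | orRight =>
        refine ⟨_, extend _ (UStep.orRight (M := reduct M') ψ χ e.1 t true) (fun _ => hsw.symm) ?_⟩
        exact ⟨(⟨χ, subs_child_or_right hmem⟩, e, true), t, rfl, hδ.2, htail⟩
    | false =>
      simp only [delta, cond] at hδ
      rw [Wq_pos k φ (subs_child_or_left hmem), Wq_pos k φ (subs_child_or_right hmem)] at hδ
      cases hδ with
      | inl h =>
        refine ⟨_, extend _ (UStep.orLeft (M := reduct M') ψ χ e.1 t false)
          (fun hh => absurd hh (fun hh' => Player.noConfusion hh')) ?_⟩
        exact ⟨(⟨ψ, subs_child_or_left hmem⟩, e, false), t, rfl, h, htail⟩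
      | inr h =>
        refine ⟨_, extend _ (UStep.orRight (M := reduct M') ψ χ e.1 t false)
          (fun hh => absurd hh (fun hh' => Player.noConfusion hh')) ?_⟩
        exact ⟨(⟨χ, subs_child_or_right hmem⟩, e, false), t, rfl, h, htail⟩
  | ex x ψ =>
    have hxk : x < k := hv x (Finset.mem_insert_self _ _)
    have htail' : ∀ (v : M'.Dom) (z : ℕ), k ≤ z → Function.update t x v z = t z := by
      intro v z hz
      rw [Function.update_of_ne]
      omega
    cases b with
    | true =>
      simp only [delta, cond, FOSat] at hδ
      have hedge := hws.1 w _ hwalk hlast rfl ⟨_, UStep.exStep (M := reduct M') x ψ e.1 t true (t 0)⟩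
      obtain ⟨q, hsw⟩ : ∃ q : SCLPos V (reduct M').Dom, σ w = q := ⟨_, rfl⟩
      rw [hsw] at hedge
      change UStep (reduct M') (SCLPos.mk (D := (reduct M').Dom) _ _ _ _) q at hedge
      cases hedge
      rename_i v
      ·
        refine ⟨_, extend _ (UStep.exStep (M := reduct M') x ψ e.1 t true v) (fun _ => hsw.symm) ?_⟩
        refine ⟨(⟨ψ, subs_child_ex hmem⟩, e, true), Function.update t x v, rfl, ?_,
          fun z hz => (htail' v z hz).trans (htail z hz)⟩
        have := hδ v
        rw [Wq_pos k φ (subs_child_ex hmem)] at this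
        exact this
    | false =>
      simp only [delta, cond, FOSat] at hδ
      obtain ⟨v, hδv⟩ := hδ
      rw [Wq_pos k φ (subs_child_ex hmem)] at hδv
      refine ⟨_, extend _ (UStep.exStep (M := reduct M') x ψ e.1 t false v)
        (fun hh => absurd hh (fun hh' => Player.noConfusion hh')) ?_⟩
      exact ⟨(⟨ψ, subs_child_ex hmem⟩, e, false), Function.update t x v, rfl, hδv,
        fun z hz => (htail' v z hz).trans (htail z hz)⟩
  | all x ψ =>
    have hxk : x < k := hv x (Finset.mem_insert_self _ _)
    have htail' : ∀ (v : M'.Dom) (z : ℕ), k ≤ z → Function.update t x v z = t z := by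
      intro v z hz
      rw [Function.update_of_ne]
      omega
    cases b with
    | true =>
      simp only [delta, cond, FOSat] at hδ
      obtain ⟨v, hδv⟩ := hδ
      rw [Wq_pos k φ (subs_child_all hmem)] at hδv
      refine ⟨_, extend _ (UStep.allStep (M := reduct M') x ψ e.1 t true v)
        (fun hh => absurd hh (fun hh' => Player.noConfusion hh')) ?_⟩
      exact ⟨(⟨ψ, subs_child_all hmem⟩, e, true), Function.update t x v, rfl, hδv,
        fun z hz => (htail' v z hz).trans (htail z hz)⟩
    | false =>
      simp only [delta, cond, FOSat] at hδ
      have hedge := hws.1 w _ hwalk hlast rfl ⟨_, UStep.allStep (M := reduct M') x ψ e.1 t false (t 0)⟩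
      obtain ⟨q, hsw⟩ : ∃ q : SCLPos V (reduct M').Dom, σ w = q := ⟨_, rfl⟩
      rw [hsw] at hedge
      change UStep (reduct M') (SCLPos.mk (D := (reduct M').Dom) _ _ _ _) q at hedge
      cases hedge
      rename_i v
      ·
        refine ⟨_, extend _ (UStep.allStep (M := reduct M') x ψ e.1 t false v) (fun _ => hsw.symm) ?_⟩
        refine ⟨(⟨ψ, subs_child_all hmem⟩, e, false), Function.update t x v, rfl, ?_,
          fun z hz => (htail' v z hz).trans (htail z hz)⟩
        have := hδ v
        rw [Wq_pos k φ (subs_child_all hmem)] at this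
        exact this
  | lab L ψ =>
    have hedge := hws.1 w _ hwalk hlast rfl ⟨_, UStep.labStep (M := reduct M') L ψ e.1 t b⟩
    obtain ⟨q, hsw⟩ : ∃ q : SCLPos V (reduct M').Dom, σ w = q := ⟨_, rfl⟩
    rw [hsw] at hedge
    change UStep (reduct M') (SCLPos.mk (D := (reduct M').Dom) _ _ _ _) q at hedge
    cases hedge
    refine ⟨_, extend _ (UStep.labStep (M := reduct M') L ψ e.1 t b) (fun _ => hsw.symm) ?_⟩
    refine ⟨(⟨ψ, subs_child_lab hmem⟩, envUpd φ e L ψ, b), t, ?_, ?_, htail⟩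
    · rw [envUpd_eq φ e hmem]; rfl
    · simp only [delta] at hδ
      rw [Wq_pos k φ (subs_child_lab hmem)] at hδ
      exact hδ

end Direction2

/-! ## Proof of the main theorem -/

open SCLFormula GameArena in
theorem scl_k_into_universal_so' {V : Vocab} (k : ℕ) (φ : SCLFormula V)
    (hφ : UsesVarsLt k φ) :
    ∃ (N : Type) (_ : Finite N) (na : N → ℕ)
      (Ψ : SCLFormula (extVocab V N na)),
      Ψ.IsFO ∧ UsesVarsLt k Ψ ∧
      (∀ (M : Struct.{u} V) (s : ℕ → M.Dom),
        ¬ (gameU M).HasWinningStrategy .eloise (initPos φ s) →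
          ∃ J : ∀ n : N, (Fin (na n) → M.Dom) → Prop,
            FOSat (expand M J) s Ψ) ∧
      (∀ (M' : Struct.{u} (extVocab V N na)) (s : ℕ → M'.Dom),
        FOSat M' s Ψ →
          ¬ (gameU (reduct M')).HasWinningStrategy .eloise (initPos φ s)) ∧
      (∀ (M : Struct.{u} V) (s : ℕ → M.Dom),
        SCLTrue M s φ ↔
          ∀ J : ∀ n : N, (Fin (na n) → M.Dom) → Prop,
            FOSat (expand M J) s (SCLFormula.not Ψ)) := by
  classical
  haveI : Fintype (SclState φ) := Fintype.ofFinite _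
  let states : List (SclState φ) := Finset.univ.toList
  have hstates : ∀ c : SclState φ, c ∈ states :=
    fun c => Finset.mem_toList.mpr (Finset.mem_univ c)
  let cinit : SclState φ := (⟨φ, self_mem_subs φ⟩, ⟨fun _ => none, goodEnv_none φ⟩, true)
  let Ψ : SCLFormula (tau' k φ) :=
    .and (Wat k φ cinit) (conjF (states.map (axFor k φ)))
  -- direction (1)
  have dir1 : ∀ (M : Struct.{u} V) (s : ℕ → M.Dom),
      ¬ (gameU M).HasWinningStrategy .eloise (initPos φ s) →
        ∃ J : ∀ c : SclState φ, (Fin k → M.Dom) → Prop,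
          FOSat (expand M J) s Ψ := by
    intro M s hnowin
    refine ⟨canonJ k φ M, ?_, ?_⟩
    · exact ⟨s, fun i => rfl, hnowin⟩
    · refine (FOSat_conjF _ _ _).mpr ?_
      intro ψ hψ
      obtain ⟨c, _, rfl⟩ := List.mem_map.mp hψ
      exact axFor_sound k φ hφ M c s
  -- direction (2)
  have dir2 : ∀ (M' : Struct.{u} (tau' k φ)) (s : ℕ → M'.Dom),
      FOSat M' s Ψ →
        ¬ (gameU (reduct M')).HasWinningStrategy .eloise (initPos φ s) := by
    intro M' s hΨ hwin
    obtain ⟨hΨ1, hΨ2⟩ := hΨ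
    have hax : ∀ (c : SclState φ) (s₀ : ℕ → M'.Dom), (∀ x, k ≤ x → s₀ x = s x) →
        M'.interp (Sum.inr c) (fun i : Fin k => s₀ i.val) →
        FOSat M' s₀ (delta k φ c.1.1 c.2.1 c.2.2) := by
      intro c s₀ htail hint
      have hmem : axFor k φ c ∈ states.map (axFor k φ) :=
        List.mem_map_of_mem (hstates c)
      have hax1 := (FOSat_conjF M' s _).mp hΨ2 _ hmem
      have hax2 := FOSat_alls_elim M' _ s hax1 s₀
        (fun x hx => htail x (Nat.le_of_not_lt (fun hlt => hx (List.mem_range.mpr hlt))))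
      rcases hax2 with h | h
      · exact absurd hint h
      · exact h
    obtain ⟨σ, hws⟩ := hwin
    have step : ∀ w, SclInv k φ M' s σ w → ∃ p', SclInv k φ M' s σ (w ++ [p']) :=
      inv_step k φ M' s hφ hax σ hws
    let F : {w : List (SCLPos V M'.Dom) // SclInv k φ M' s σ w} →
        {w : List (SCLPos V M'.Dom) // SclInv k φ M' s σ w} :=
      fun x => ⟨x.1 ++ [(step x.1 x.2).choose], (step x.1 x.2).choose_spec⟩
    let f : ℕ → {w : List (SCLPos V M'.Dom) // SclInv k φ M' s σ w} :=
      fun n => F^[n] ⟨[initPos φ s], inv_init k φ M' s σ hΨ1⟩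
    have hfs : ∀ n, f (n + 1) = F (f n) := fun n => Function.iterate_succ_apply' F n _
    have hfs1 : ∀ n, (f (n + 1)).1 = (f n).1 ++ [(step (f n).1 (f n).2).choose] :=
      fun n => congrArg Subtype.val (hfs n)
    let g : ℕ → SCLPos V M'.Dom := fun n => ((f n).1).getLast?.getD (initPos φ s)
    have hglast : ∀ n, (f n).1.getLast? = some (g n) := by
      intro n
      obtain ⟨c, t, hlast, -, -⟩ := (f n).2.2.2
      show (f n).1.getLast? = some (((f n).1).getLast?.getD (initPos φ s))
      rw [hlast]
      rfl
    have hgsucc : ∀ n, g (n + 1) = (step (f n).1 (f n).2).choose := by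
      intro n
      show ((f (n + 1)).1).getLast?.getD (initPos φ s) = _
      rw [hfs1 n, List.getLast?_append_cons, List.getLast?_singleton]
      rfl
    have hchain : ∀ n, (gameU (reduct M')).edge (g n) (g (n + 1)) := by
      intro n
      have h2 := (f (n + 1)).2.1.2
      rw [hfs1 n, ← hgsucc n] at h2
      have h3 := (List.isChain_append.mp h2).2.2
      exact h3 (g n) (hglast n) (g (n + 1)) rfl
    have hofn : ∀ n, (f n).1 = List.ofFn (fun i : Fin (n + 1) => g i) := by
      intro n
      induction n with
      | zero =>
        have h0 : (List.ofFn fun i : Fin 1 => g i) = [g 0] := by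
          simp [List.ofFn_succ]
        rw [h0]
        rfl
      | succ n ih =>
        have h1 : (List.ofFn fun i : Fin (n + 1 + 1) => g i) =
            (List.ofFn fun i : Fin (n + 1) => g i) ++ [g (n + 1)] := by
          rw [List.ofFn_succ' (f := fun i : Fin (n + 1 + 1) => g i)]
          simp [List.concat_eq_append]
        rw [hfs1 n, ← hgsucc n, ih, h1]
    have hfol' : (gameU (reduct M')).FollowsInf .eloise σ g := by
      intro n hturn
      have hpre : ((f n).1 ++ [g (n + 1)]) <+: (f (n + 1)).1 := by
        rw [hfs1 n, hgsucc n]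
      have h5 := (f (n + 1)).2.2.1 (f n).1 (g n) (g (n + 1)) hpre (hglast n) hturn
      rw [hofn n] at h5
      exact h5
    exact hws.2.2 g ⟨rfl, hchain⟩ hfol'
  refine ⟨SclState φ, inferInstance, fun _ => k, Ψ, ?_, ?_, dir1, dir2, ?_⟩
  · -- IsFO
    refine ⟨trivial, isFO_conjF _ ?_⟩
    intro ψ hψ
    obtain ⟨c, _, rfl⟩ := List.mem_map.mp hψ
    exact isFO_alls _ ⟨trivial, isFO_delta k φ _ _ _⟩
  · -- UsesVarsLt
    intro x hx
    rcases Finset.mem_union.mp hx with h | h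
    · exact vars_Wat k φ _ x h
    · obtain ⟨ψ, hψ, hx'⟩ := vars_conjF _ x h
      obtain ⟨c, _, rfl⟩ := List.mem_map.mp hψ
      rcases vars_alls _ _ x hx' with h' | h'
      · exact List.mem_range.mp h'
      · rcases Finset.mem_union.mp h' with h'' | h''
        · exact vars_Wat k φ _ x h''
        · exact vars_delta k φ hφ c.1.2 c.2.1 c.2.2 x h''
  · -- the ∀SO equivalence
    intro M s
    constructor
    · intro htrue J
      intro hsat
      exact dir2 (expand M J) s hsat htrue
    · intro hJ
      by_contra hnot
      obtain ⟨J, hsat⟩ := dir1 M s hnot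
      exact hJ J hsat

/-- For every formula `φ` of `SCL^k` over `τ = V` there are
a finite relational extension `τ' ⊇ τ` and a first-order formula `Ψ` of
`FO^k` over `τ'` such that: (1) every `τ`-model in which Eloise has no
winning strategy in `G_∞(𝔄,s,φ)` expands to a `τ'`-model of `Ψ`; (2) in the
`τ`-reduct of any `τ'`-model of `Ψ`, Eloise has no winning strategy in the
unbounded game for `φ`.  Consequently `φ` is equivalent to the universal
second-order formula `∀R̄ ¬Ψ` whose first-order part uses at most `k`
variables. -/
theorem scl_k_into_universal_so {V : Vocab} (k : ℕ) (φ : SCLFormula V)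
    (hφ : UsesVarsLt k φ) :
    ∃ (N : Type) (_ : Finite N) (na : N → ℕ)
      (Ψ : SCLFormula (extVocab V N na)),
      Ψ.IsFO ∧ UsesVarsLt k Ψ ∧
      (∀ (M : Struct.{u} V) (s : ℕ → M.Dom),
        ¬ (gameU M).HasWinningStrategy .eloise (initPos φ s) →
          ∃ J : ∀ n : N, (Fin (na n) → M.Dom) → Prop,
            FOSat (expand M J) s Ψ) ∧
      (∀ (M' : Struct.{u} (extVocab V N na)) (s : ℕ → M'.Dom),
        FOSat M' s Ψ →
          ¬ (gameU (reduct M')).HasWinningStrategy .eloise (initPos φ s)) ∧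
      (∀ (M : Struct.{u} V) (s : ℕ → M.Dom),
        SCLTrue M s φ ↔
          ∀ J : ∀ n : N, (Fin (na n) → M.Dom) → Prop,
            FOSat (expand M J) s (SCLFormula.not Ψ)) :=
  scl_k_into_universal_so' k φ hφ
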